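/- arXiv:2009.14686 — 5 statements merged into one kernel-verified Lean document; each statement's English description precedes it below -/
import Mathlib

section
/- Let an RDS on ℝ be given by a finitely supported measure μ on Homeo⁺(ℝ), and let the inverse RDS be generated by the measure μ̂ with μ̂(f) = μ(f⁻¹). If for the forward dynamics every orbit tends to +∞ almost surely (φ₊ ≡ 1), then for the inverse dynamics the probability that an orbit tends to +∞ is zero at every starting point (φ̂₊ ≡ 0). -/
open MeasureTheory ProbabilityTheory Filter Set
open scoped ENNReal Topology

private def rdsComp {ι : Type*} (f : ι → ℝ → ℝ) : ℕ → (ℕ → ι) → ℝ → ℝ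
  | 0, _, x => x
  | n + 1, u, x => f (u n) (rdsComp f n u x)

private lemma rdsComp_congr {ι : Type*} (f : ι → ℝ → ℝ) :
    ∀ (n : ℕ) (u u' : ℕ → ι) (x : ℝ), (∀ k < n, u k = u' k) →
      rdsComp f n u x = rdsComp f n u' x
  | 0, _, _, _, _ => rfl
  | n + 1, u, u', x, h => by
    simp only [rdsComp, h n (Nat.lt_succ_self n),
      rdsComp_congr f n u u' x (fun k hk => h k (hk.trans (Nat.lt_succ_self n)))]

private lemma rdsComp_shift {ι : Type*} (f : ι → ℝ → ℝ) :
    ∀ (n : ℕ) (u : ℕ → ι) (x : ℝ),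
      rdsComp f (n + 1) u x = rdsComp f n (fun k => u (k + 1)) (f (u 0) x)
  | 0, u, x => rfl
  | n + 1, u, x => by
    show f (u (n + 1)) (rdsComp f (n + 1) u x)
        = f ((fun k => u (k + 1)) n) (rdsComp f n (fun k => u (k + 1)) (f (u 0) x))
    rw [rdsComp_shift f n u x]

private lemma rdsComp_strictMono {ι : Type*} {f : ι → ℝ → ℝ} (hf : ∀ i, StrictMono (f i)) :
    ∀ (n : ℕ) (u : ℕ → ι), StrictMono (rdsComp f n u)
  | 0, _ => fun _ _ h => h
  | n + 1, u => (hf (u n)).comp (rdsComp_strictMono hf n u)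

private lemma rdsComp_key {ι : Type*} {f finv : ι → ℝ → ℝ}
    (hfinv : ∀ i y, f i (finv i y) = y) :
    ∀ (n : ℕ) (u : ℕ → ι) (y : ℝ),
      rdsComp f n u (rdsComp finv n (fun k => u (n - 1 - k)) y) = y
  | 0, _, _ => rfl
  | n + 1, u, y => by
    have h1 : rdsComp finv (n + 1) (fun k => u (n + 1 - 1 - k)) y
        = rdsComp finv n (fun k => u (n - 1 - k)) (finv (u n) y) := by
      rw [rdsComp_shift]
      have e1 : (fun k => (fun k => u (n + 1 - 1 - k)) (k + 1)) = fun k => u (n - 1 - k) := by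
        funext k
        show u (n + 1 - 1 - (k + 1)) = u (n - 1 - k)
        congr 1; omega
      have e2 : n + 1 - 1 - 0 = n := by omega
      rw [e1, e2]
    show f (u n) (rdsComp f n u (rdsComp finv (n + 1) (fun k => u (n + 1 - 1 - k)) y)) = y
    rw [h1, rdsComp_key hfinv n u (finv (u n) y), hfinv (u n) y]

private def extFun {ι : Type*} (j : ι) (n : ℕ) (v : Fin n → ι) (m : ℕ) : ι :=
  if h : m < n then v ⟨m, h⟩ else j

/-- if for the forward dynamics every orbit tends to +∞ almost surely,
then for the inverse dynamics (i.i.d. applications of the inverse maps, with the same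
probabilities) the probability of tending to +∞ is zero at every starting point. -/
theorem rds_forward_plus_implies_inverse_plus_zero
    {Ω : Type*} [MeasurableSpace Ω] (P : Measure Ω) [IsProbabilityMeasure P]
    {ι : Type*} [Fintype ι] [MeasurableSpace ι] [MeasurableSingletonClass ι]
    (f : ι → ℝ → ℝ)
    (hf : ∀ i, StrictMono (f i) ∧ Function.Bijective (f i))
    (g : ℕ → Ω → ι) (hgmeas : ∀ n, Measurable (g n))
    (hindep : iIndepFun g P)
    (μ : Measure ι) [IsProbabilityMeasure μ] (hlaw : ∀ n, Measure.map (g n) P = μ)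
    (F : ℕ → Ω → ℝ → ℝ)
    (hF0 : ∀ ω x, F 0 ω x = x)
    (hFS : ∀ n ω x, F (n + 1) ω x = f (g n ω) (F n ω x))
    (finv : ι → ℝ → ℝ)
    (hfinv : ∀ i, Function.LeftInverse (finv i) (f i) ∧
      Function.RightInverse (finv i) (f i))
    (Fhat : ℕ → Ω → ℝ → ℝ)
    (hFhat0 : ∀ ω x, Fhat 0 ω x = x)
    (hFhatS : ∀ n ω x, Fhat (n + 1) ω x = finv (g n ω) (Fhat n ω x))
    (hforward : ∀ x : ℝ, P {ω | Tendsto (fun n => F n ω x) atTop atTop} = 1) :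
    ∀ x : ℝ, P {ω | Tendsto (fun n => Fhat n ω x) atTop atTop} = 0 := by
  classical
  intro x
  have hne : Nonempty ι := by
    by_contra h
    rw [not_nonempty_iff] at h
    have h1 : μ Set.univ = 1 := measure_univ
    rw [Set.univ_eq_empty_iff.mpr h, measure_empty] at h1
    exact zero_ne_one h1
  obtain ⟨j⟩ := hne
  have hfm : ∀ i, Measurable (f i) := fun i => (hf i).1.monotone.measurable
  have hkey : ∀ i y, f i (finv i y) = y := fun i y => (hfinv i).2 y
  -- express F, Fhat through rdsComp
  have hFx : ∀ n ω, F n ω x = rdsComp f n (fun k => g k ω) x := by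
    intro n
    induction n with
    | zero => intro ω; rw [hF0]; rfl
    | succ n ih => intro ω; rw [hFS, ih ω]; rfl
  have hFhatx : ∀ n ω, Fhat n ω x = rdsComp finv n (fun k => g k ω) x := by
    intro n
    induction n with
    | zero => intro ω; rw [hFhat0]; rfl
    | succ n ih => intro ω; rw [hFhatS, ih ω]; rfl
  -- measurability of forward iterates
  have hFmeas : ∀ n, Measurable (fun ω => F n ω x) := by
    intro n
    induction n with
    | zero => simp only [hF0]; exact measurable_const
    | succ n ih =>
      have h2 : Measurable (fun p : ℝ × ι => f p.2 p.1) :=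
        measurable_from_prod_countable_left fun i => hfm i
      simp only [hFS]
      exact h2.comp (ih.prodMk (hgmeas n))
  have hCmeas : ∀ n, MeasurableSet {ω | F n ω x < x} :=
    fun n => measurableSet_lt (hFmeas n) measurable_const
  -- key identity: P (x < Fhat n x) = P (F n x < x)
  have hBC : ∀ n : ℕ, P {ω | x < Fhat n ω x} = P {ω | F n ω x < x} := by
    intro n
    set Φ : Ω → (Fin n → ι) := fun ω k => g k ω with hΦdef
    have hΦ : Measurable Φ := measurable_pi_lambda _ fun k => hgmeas k
    have hlawΦ : Measure.map Φ P = Measure.pi (fun _ : Fin n => μ) := by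
      refine (Measure.pi_eq fun s hs => ?_).symm
      rw [Measure.map_apply hΦ (MeasurableSet.univ_pi hs)]
      have hpre : Φ ⁻¹' Set.pi Set.univ s
          = ⋂ m ∈ Finset.range n, g m ⁻¹' (if h : m < n then s ⟨m, h⟩ else Set.univ) := by
        ext ω
        simp only [Set.mem_preimage, Set.mem_univ_pi, Set.mem_iInter, Finset.mem_range,
          Set.mem_preimage]
        constructor
        · intro h m hm; rw [dif_pos hm]; exact h ⟨m, hm⟩
        · intro h k
          have := h k k.isLt
          rwa [dif_pos k.isLt] at this
      rw [hpre, hindep.measure_inter_preimage_eq_mul (Finset.range n)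
        (sets := fun m => if h : m < n then s ⟨m, h⟩ else Set.univ)
        (fun m _ => by split_ifs; exacts [hs _, MeasurableSet.univ])]
      rw [← Fin.prod_univ_eq_prod_range
        (fun m => P (g m ⁻¹' (if h : m < n then s ⟨m, h⟩ else Set.univ))) n]
      refine Finset.prod_congr rfl fun k _ => ?_
      rw [dif_pos k.isLt]
      have : (⟨(k : ℕ), k.isLt⟩ : Fin n) = k := rfl
      rw [this, ← hlaw (k : ℕ), Measure.map_apply (hgmeas (k : ℕ)) (hs k)]
    set Shat : Set (Fin n → ι) := {v | x < rdsComp finv n (extFun j n v) x} with hShatdef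
    set Sfwd : Set (Fin n → ι) := {v | rdsComp f n (extFun j n v) x < x} with hSfwddef
    have hShat : MeasurableSet Shat := (Set.to_countable _).measurableSet
    have hSfwd : MeasurableSet Sfwd := (Set.to_countable _).measurableSet
    have hBset : {ω | x < Fhat n ω x} = Φ ⁻¹' Shat := by
      ext ω
      simp only [Set.mem_setOf_eq, Set.mem_preimage, hShatdef]
      rw [hFhatx n ω,
        rdsComp_congr finv n (extFun j n (Φ ω)) (fun k => g k ω) x
          (fun k hk => by simp only [extFun, dif_pos hk]; rfl)]
    have hCset : {ω | F n ω x < x} = Φ ⁻¹' Sfwd := by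
      ext ω
      simp only [Set.mem_setOf_eq, Set.mem_preimage, hSfwddef]
      rw [hFx n ω,
        rdsComp_congr f n (extFun j n (Φ ω)) (fun k => g k ω) x
          (fun k hk => by simp only [extFun, dif_pos hk]; rfl)]
    set T : (Fin n → ι) → (Fin n → ι) := fun v k => v (Fin.rev k) with hTdef
    have hT : Measurable T := measurable_pi_lambda _ fun k => measurable_pi_apply _
    have hTpre : T ⁻¹' Shat = Sfwd := by
      ext v
      simp only [Set.mem_preimage, Set.mem_setOf_eq, hShatdef, hSfwddef]
      have h1 : rdsComp finv n (extFun j n (T v)) x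
          = rdsComp finv n (fun k => extFun j n v (n - 1 - k)) x := by
        refine rdsComp_congr finv n _ _ x fun k hk => ?_
        have hk' : n - 1 - k < n := by omega
        simp only [extFun, dif_pos hk, dif_pos hk', hTdef]
        congr 1
        ext
        simp only [Fin.val_rev]
        omega
      rw [h1, ← (rdsComp_strictMono (fun i => (hf i).1) n (extFun j n v)).lt_iff_lt,
        rdsComp_key hkey n (extFun j n v) x]
    have hTlaw : Measure.map T (Measure.pi fun _ : Fin n => μ)
        = Measure.pi fun _ : Fin n => μ := by
      refine (Measure.pi_eq fun s hs => ?_).symm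
      rw [Measure.map_apply hT (MeasurableSet.univ_pi hs)]
      have hTs : T ⁻¹' Set.pi Set.univ s = Set.pi Set.univ fun k => s (Fin.rev k) := by
        ext v
        simp only [Set.mem_preimage, Set.mem_univ_pi, hTdef]
        constructor
        · intro h k
          have := h (Fin.rev k)
          rwa [Fin.rev_rev] at this
        · intro h k
          have := h (Fin.rev k)
          rwa [Fin.rev_rev] at this
      rw [hTs, Measure.pi_pi]
      exact Fintype.prod_equiv Fin.revPerm _ _ fun k => rfl
    calc P {ω | x < Fhat n ω x} = P (Φ ⁻¹' Shat) := by rw [hBset]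
      _ = Measure.map Φ P Shat := (Measure.map_apply hΦ hShat).symm
      _ = Measure.pi (fun _ : Fin n => μ) Shat := by rw [hlawΦ]
      _ = Measure.map T (Measure.pi fun _ : Fin n => μ) Shat := by rw [hTlaw]
      _ = Measure.pi (fun _ : Fin n => μ) (T ⁻¹' Shat) := Measure.map_apply hT hShat
      _ = Measure.pi (fun _ : Fin n => μ) Sfwd := by rw [hTpre]
      _ = Measure.map Φ P Sfwd := by rw [hlawΦ]
      _ = P (Φ ⁻¹' Sfwd) := Measure.map_apply hΦ hSfwd
      _ = P {ω | F n ω x < x} := by rw [← hCset]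
  -- the forward probabilities tend to 0
  have hS₀ : MeasurableSet {ω | Tendsto (fun n => F n ω x) atTop atTop} :=
    measurableSet_tendsto atTop hFmeas
  have hae : ∀ᵐ ω ∂P, Tendsto (fun n => F n ω x) atTop atTop := by
    rw [ae_iff]
    have hcompl : {ω | ¬ Tendsto (fun n => F n ω x) atTop atTop}
        = {ω | Tendsto (fun n => F n ω x) atTop atTop}ᶜ := rfl
    rw [hcompl, measure_compl hS₀ (measure_ne_top P _), hforward x, measure_univ, tsub_self]
  have hlim : Tendsto (fun n => P {ω | F n ω x < x}) atTop (𝓝 0) := by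
    have h := tendsto_lintegral_of_dominated_convergence (μ := P)
      (F := fun n ω => ({ω | F n ω x < x}).indicator (1 : Ω → ℝ≥0∞) ω)
      (f := fun _ => 0) (fun _ => (1 : ℝ≥0∞))
      (fun n => (measurable_one.indicator (hCmeas n)))
      (fun n => Filter.Eventually.of_forall fun ω => Set.indicator_le_self _ _ ω)
      (by simp)
      ?_
    · have heq : (fun n => P {ω | F n ω x < x})
          = fun n => ∫⁻ ω, ({ω | F n ω x < x}).indicator (1 : Ω → ℝ≥0∞) ω ∂P := by
        funext n
        rw [lintegral_indicator_one (hCmeas n)]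
      rw [heq]
      simpa using h
    · filter_upwards [hae] with ω hω
      refine Tendsto.congr' ?_ tendsto_const_nhds
      filter_upwards [hω.eventually_ge_atTop x] with n hn
      simp [Set.indicator_of_notMem, not_lt.2 hn]
  -- conclusion
  have hS : {ω | Tendsto (fun n => Fhat n ω x) atTop atTop} ⊆
      ⋃ N : ℕ, ⋂ n : ℕ, ⋂ _ : N ≤ n, {ω | x < Fhat n ω x} := by
    intro ω hω
    obtain ⟨N, hN⟩ := (hω.eventually_gt_atTop x).exists_forall_of_atTop
    exact Set.mem_iUnion.mpr ⟨N, Set.mem_iInter.mpr fun n =>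
      Set.mem_iInter.mpr fun hn => hN n hn⟩
  refine le_antisymm ?_ (zero_le)
  calc P {ω | Tendsto (fun n => Fhat n ω x) atTop atTop}
      ≤ P (⋃ N : ℕ, ⋂ n : ℕ, ⋂ _ : N ≤ n, {ω | x < Fhat n ω x}) := measure_mono hS
    _ = 0 := by
      refine measure_iUnion_null fun N => ?_
      refine le_antisymm ?_ (zero_le)
      refine ge_of_tendsto hlim ?_
      filter_upwards [eventually_ge_atTop N] with n hn
      calc P (⋂ n : ℕ, ⋂ _ : N ≤ n, {ω | x < Fhat n ω x})
          ≤ P {ω | x < Fhat n ω x} :=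
            measure_mono (Set.iInter_subset_of_subset n (Set.iInter_subset _ hn))
        _ = P {ω | F n ω x < x} := hBC n
end

section
/- Consider the RDS on ℝ generated by the countable family of translations f_k(x) = x + (−1)^k e^{e^k}, k ≥ 1, applied with probabilities p_k = 1/(k(k+1)). Then for every starting point x ∈ ℝ and every compact interval J ⊂ ℝ, almost surely the random orbit F_n(x) visits J only finitely many times. -/
open MeasureTheory ProbabilityTheory Filter Set
open scoped ENNReal

section RdsAux

private lemma rds_sqrt_tendsto : Tendsto Nat.sqrt atTop atTop := by
  refine tendsto_atTop_atTop.mpr fun b => ⟨b * b, fun n hn => ?_⟩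
  calc b = Nat.sqrt (b * b) := (Nat.sqrt_eq b).symm
    _ ≤ Nat.sqrt n := Nat.sqrt_le_sqrt hn

private lemma rds_evexp (c : ℝ) (m : ℕ) : ∀ᶠ u : ℝ in atTop, c * u ^ m ≤ Real.exp u := by
  have h0 := Real.tendsto_pow_mul_exp_neg_atTop_nhds_zero m
  have h1 : ∀ᶠ u : ℝ in atTop, u ^ m * Real.exp (-u) < 1 / (|c| + 1) :=
    h0.eventually_lt_const (by positivity)
  filter_upwards [h1, eventually_ge_atTop (0:ℝ)] with u hu hu0
  have hum : (0:ℝ) ≤ u ^ m := pow_nonneg hu0 m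
  have key : u ^ m / Real.exp u ≤ 1 / (|c| + 1) := by
    rw [div_eq_mul_inv, ← Real.exp_neg]; exact hu.le
  have h2 := (div_le_div_iff₀ (Real.exp_pos u) (by positivity)).mp key
  have hc : c ≤ |c| + 1 := le_trans (le_abs_self c) (by linarith)
  nlinarith [abs_nonneg c]

private lemma rds_summable_bound :
    Summable (fun n : ℕ => Real.exp (-(Nat.sqrt n : ℝ) / 4)) := by
  have hsqrt : Tendsto (fun n : ℕ => ((Nat.sqrt n : ℝ) / 4)) atTop atTop :=
    (tendsto_natCast_atTop_atTop.comp rds_sqrt_tendsto).atTop_div_const (by norm_num)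
  have hg' : Summable (fun n : ℕ => 1 / ((n : ℝ) + 1) ^ 2) := by
    have := (summable_nat_add_iff (f := fun n : ℕ => 1 / (n : ℝ) ^ 2) 1).mpr
      (Real.summable_one_div_nat_pow.mpr one_lt_two)
    refine this.congr fun n => ?_
    push_cast
    ring
  refine summable_of_isBigO_nat hg' (Asymptotics.IsBigO.of_bound 1 ?_)
  have hev1 := hsqrt.eventually (rds_evexp 4096 4)
  have hev2 : ∀ᶠ n : ℕ in atTop, 1 ≤ Nat.sqrt n := rds_sqrt_tendsto.eventually_ge_atTop 1
  filter_upwards [hev1, hev2] with n h1 h2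
  set t : ℝ := (Nat.sqrt n : ℝ) with ht
  have ht1 : (1:ℝ) ≤ t := by rw [ht]; exact_mod_cast h2
  have hn1 : ((n : ℝ) + 1) ≤ (t + 1) ^ 2 := by
    have hlt : (n : ℝ) + 1 ≤ (t + 1) * (t + 1) := by
      rw [ht]
      exact_mod_cast Nat.succ_le_of_lt (Nat.lt_succ_sqrt n)
    nlinarith
  have hkey : ((n : ℝ) + 1) ^ 2 ≤ Real.exp (t / 4) := by
    have h3 : ((n : ℝ) + 1) ^ 2 ≤ (t + 1) ^ 4 := by nlinarith
    have h4 : (t + 1) ^ 4 ≤ 16 * t ^ 4 := by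
      calc (t + 1) ^ 4 ≤ (2 * t) ^ 4 :=
            pow_le_pow_left₀ (by linarith) (by linarith) 4
        _ = 16 * t ^ 4 := by ring
    calc ((n : ℝ) + 1) ^ 2 ≤ 16 * t ^ 4 := le_trans h3 h4
      _ = 4096 * (t / 4) ^ 4 := by ring
      _ ≤ Real.exp (t / 4) := h1
  have hpos : (0:ℝ) < ((n : ℝ) + 1) ^ 2 := by positivity
  rw [Real.norm_eq_abs, Real.norm_eq_abs, abs_of_nonneg (Real.exp_pos _).le,
    abs_of_nonneg (by positivity : (0:ℝ) ≤ 1 / ((n : ℝ) + 1) ^ 2), one_mul]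
  rw [show -t / 4 = -(t/4) by ring, Real.exp_neg, one_div]
  gcongr

private lemma rds_enn_eq (j : ℕ) (hj : 1 ≤ j) :
    (1 : ℝ≥0∞) / ((j : ℝ≥0∞) * ((j : ℝ≥0∞) + 1)) =
      ENNReal.ofReal (1 / ((j : ℝ) * ((j : ℝ) + 1))) := by
  have hj' : (0:ℝ) < j := by exact_mod_cast hj
  rw [ENNReal.ofReal_div_of_pos (by positivity), ENNReal.ofReal_one,
    ENNReal.ofReal_mul hj'.le]
  congr 1
  rw [ENNReal.ofReal_natCast, ENNReal.ofReal_add hj'.le zero_le_one,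
    ENNReal.ofReal_one, ENNReal.ofReal_natCast]

private lemma rds_det_bound (n M : ℕ) (v : ℕ → ℕ)
    (hle : ∀ i ∈ Finset.range n, v i ≤ M) (hex : ∃ i ∈ Finset.range n, v i = M) :
    Real.exp (Real.exp M) - n * Real.exp (Real.exp ((M : ℝ) - 1)) ≤
      |∑ i ∈ Finset.range n, (-1 : ℝ) ^ (v i) * Real.exp (Real.exp (v i))| := by
  classical
  set f : ℕ → ℝ := fun i => (-1 : ℝ) ^ (v i) * Real.exp (Real.exp (v i)) with hf
  set F := (Finset.range n).filter (fun i => v i = M) with hFdef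
  set G := (Finset.range n).filter (fun i => ¬ v i = M) with hGdef
  have hsplit : ∑ i ∈ F, f i + ∑ i ∈ G, f i = ∑ i ∈ Finset.range n, f i :=
    Finset.sum_filter_add_sum_filter_not _ _ _
  have hFval : ∑ i ∈ F, f i = (F.card : ℝ) * ((-1 : ℝ) ^ M * Real.exp (Real.exp M)) := by
    have hconst : ∀ i ∈ F, f i = (-1 : ℝ) ^ M * Real.exp (Real.exp M) := by
      intro i hi
      have h := (Finset.mem_filter.mp hi).2
      simp only [hf, h]
    rw [Finset.sum_congr rfl hconst, Finset.sum_const, nsmul_eq_mul]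
  have hFcard : 1 ≤ F.card := by
    obtain ⟨i, hi, hvi⟩ := hex
    exact Finset.card_pos.mpr ⟨i, Finset.mem_filter.mpr ⟨hi, hvi⟩⟩
  have habsF : Real.exp (Real.exp M) ≤ |∑ i ∈ F, f i| := by
    rw [hFval, abs_mul, abs_mul, abs_pow, abs_neg, abs_one, one_pow, one_mul,
      abs_of_nonneg (Real.exp_pos _).le, Nat.abs_cast]
    have : (1:ℝ) ≤ (F.card : ℝ) := by exact_mod_cast hFcard
    nlinarith [Real.exp_pos (Real.exp (M:ℝ))]
  have habsG : |∑ i ∈ G, f i| ≤ (n : ℝ) * Real.exp (Real.exp ((M : ℝ) - 1)) := by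
    calc |∑ i ∈ G, f i| ≤ ∑ i ∈ G, |f i| := Finset.abs_sum_le_sum_abs _ _
      _ ≤ ∑ _i ∈ G, Real.exp (Real.exp ((M : ℝ) - 1)) := by
          refine Finset.sum_le_sum fun i hi => ?_
          obtain ⟨hiR, hine⟩ := Finset.mem_filter.mp hi
          have hlt : v i < M := lt_of_le_of_ne (hle i hiR) hine
          have hcast : (v i : ℝ) ≤ (M : ℝ) - 1 := by
            have h : v i + 1 ≤ M := hlt
            have h' : ((v i : ℝ) + 1) ≤ (M : ℝ) := by exact_mod_cast h
            linarith
          rw [hf]; simp only [abs_mul, abs_pow, abs_neg, abs_one, one_pow, one_mul,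
            abs_of_nonneg (Real.exp_pos _).le]
          exact Real.exp_le_exp.mpr (Real.exp_le_exp.mpr hcast)
      _ = (G.card : ℝ) * Real.exp (Real.exp ((M : ℝ) - 1)) := by
          rw [Finset.sum_const, nsmul_eq_mul]
      _ ≤ (n : ℝ) * Real.exp (Real.exp ((M : ℝ) - 1)) := by
          have h : G.card ≤ n := by
            simpa using (Finset.card_filter_le (Finset.range n) _)
          have h' : (G.card : ℝ) ≤ (n : ℝ) := by exact_mod_cast h
          nlinarith [Real.exp_pos (Real.exp ((M:ℝ) - 1))]
  have htri : |∑ i ∈ F, f i| ≤ |∑ i ∈ Finset.range n, f i| + |∑ i ∈ G, f i| := by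
    have h : ∑ i ∈ F, f i = ∑ i ∈ Finset.range n, f i - ∑ i ∈ G, f i := by
      rw [← hsplit]; ring
    rw [h]
    exact abs_sub _ _
  linarith

private lemma rds_single_bound {Ω : Type*} [MeasurableSpace Ω] (P : Measure Ω)
    [IsProbabilityMeasure P] (g : Ω → ℕ) (hg : Measurable g)
    (hlaw : ∀ j : ℕ, 1 ≤ j →
      P {ω | g ω = j} = ENNReal.ofReal (1 / ((j : ℝ) * ((j : ℝ) + 1)))) (s : ℕ) :
    P {ω | g ω ≤ s} ≤ ENNReal.ofReal (1 - 1 / (2 * ((s : ℝ) + 1))) := by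
  classical
  set A : Set Ω := {ω | g ω ≤ s} with hA
  set E : ℕ → Set Ω := fun i => {ω | g ω = s + 1 + i} with hE
  have hEmeas : ∀ i, MeasurableSet (E i) := fun i => hg (measurableSet_singleton _)
  have hdisj : (↑(Finset.range (s + 1)) : Set ℕ).PairwiseDisjoint E := by
    intro i _ j _ hij
    refine Set.disjoint_left.mpr fun ω hi hj => hij ?_
    have h : s + 1 + i = s + 1 + j := by rw [← hi, ← hj]
    omega
  have hU : P (⋃ i ∈ Finset.range (s + 1), E i) = ∑ i ∈ Finset.range (s + 1), P (E i) :=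
    measure_biUnion_finset hdisj fun i _ => hEmeas i
  have tele : ∀ a m : ℕ, 1 ≤ a →
      ∑ i ∈ Finset.range m, (1:ℝ) / ((a + i : ℕ) * ((a + i : ℕ) + 1)) =
        1 / a - 1 / (a + m) := by
    intro a m ha
    induction m with
    | zero => simp
    | succ m ih =>
      rw [Finset.sum_range_succ, ih]
      have h1 : (0:ℝ) < a := by exact_mod_cast ha
      have h2 : (0:ℝ) < (a:ℝ) + m := by positivity
      have h3 : (0:ℝ) < (a:ℝ) + m + 1 := by positivity
      push_cast
      field_simp
      ring
  have hsumval : ∑ i ∈ Finset.range (s + 1), P (E i) =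
      ENNReal.ofReal (1 / (2 * ((s : ℝ) + 1))) := by
    have h1 : ∀ i ∈ Finset.range (s + 1),
        P (E i) = ENNReal.ofReal
          (1 / (((s + 1 + i : ℕ) : ℝ) * (((s + 1 + i : ℕ) : ℝ) + 1))) := by
      intro i _
      exact hlaw (s + 1 + i) (by omega)
    rw [Finset.sum_congr rfl h1, ← ENNReal.ofReal_sum_of_nonneg (by
      intro i _
      positivity)]
    congr 1
    have h2 := tele (s + 1) (s + 1) (by omega)
    push_cast at h2 ⊢
    rw [h2]
    have h3 : (0:ℝ) < (s:ℝ) + 1 := by positivity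
    field_simp
    ring
  have hABdisj : Disjoint A (⋃ i ∈ Finset.range (s + 1), E i) := by
    refine Set.disjoint_left.mpr fun ω hωA hωU => ?_
    simp only [Set.mem_iUnion] at hωU
    obtain ⟨i, _, hωi⟩ := hωU
    have h1 : g ω = s + 1 + i := hωi
    have h2 : g ω ≤ s := hωA
    omega
  have hle1 : P A + ENNReal.ofReal (1 / (2 * ((s : ℝ) + 1))) ≤ 1 := by
    rw [← hsumval, ← hU, ← measure_union hABdisj
      (MeasurableSet.biUnion (Finset.range (s+1)).countable_toSet fun i _ => hEmeas i)]
    calc P (A ∪ ⋃ i ∈ Finset.range (s + 1), E i) ≤ P Set.univ :=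
          measure_mono (Set.subset_univ _)
      _ = 1 := measure_univ
  calc P A ≤ 1 - ENNReal.ofReal (1 / (2 * ((s : ℝ) + 1))) :=
        ENNReal.le_sub_of_add_le_right ENNReal.ofReal_ne_top hle1
    _ = ENNReal.ofReal (1 - 1 / (2 * ((s : ℝ) + 1))) := by
        rw [ENNReal.ofReal_sub _ (by positivity), ENNReal.ofReal_one]

end RdsAux

/-- for the RDS of translations f_k(x) = x + (-1)^k e^{e^k} applied with
probabilities 1/(k(k+1)), every orbit almost surely visits each compact interval only
finitely many times. -/
theorem rds_monster_finitely_many_visits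
    {Ω : Type*} [MeasurableSpace Ω] (P : Measure Ω) [IsProbabilityMeasure P]
    (k : ℕ → Ω → ℕ) (hkmeas : ∀ n, Measurable (k n))
    (hindep : iIndepFun k P)
    (hlaw : ∀ n j : ℕ, 1 ≤ j →
      P {ω | k n ω = j} = (1 : ℝ≥0∞) / ((j : ℝ≥0∞) * ((j : ℝ≥0∞) + 1))) :
    ∀ x a b : ℝ, ∀ᵐ ω ∂P,
      {n : ℕ | (x + ∑ i ∈ Finset.range n,
        (-1 : ℝ) ^ (k i ω) * Real.exp (Real.exp (k i ω))) ∈ Set.Icc a b}.Finite := by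
  intro x a b
  classical
  set C : ℝ := |x| + max |a| |b| + 1 with hC
  set B : ℕ → Set Ω := fun n => ⋂ i ∈ Finset.range n, k i ⁻¹' Set.Iic (Nat.sqrt n)
    with hBdef
  have hlaw' : ∀ i j : ℕ, 1 ≤ j →
      P {ω | k i ω = j} = ENNReal.ofReal (1 / ((j : ℝ) * ((j : ℝ) + 1))) := by
    intro i j hj
    rw [hlaw i j hj, rds_enn_eq j hj]
  -- probability bound for B n
  have hBbound : ∀ n, P (B n) ≤ ENNReal.ofReal (Real.exp (-(Nat.sqrt n : ℝ) / 4)) := by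
    intro n
    set sn := Nat.sqrt n with hsn
    have hnn : (0:ℝ) ≤ 1 - 1 / (2 * ((sn : ℝ) + 1)) := by
      have hp : (0:ℝ) < 2 * ((sn : ℝ) + 1) := by positivity
      rw [sub_nonneg, div_le_one hp]
      have : (0:ℝ) ≤ (sn : ℝ) := Nat.cast_nonneg sn
      linarith
    have hprod := hindep.measure_inter_preimage_eq_mul (Finset.range n)
      (sets := fun _ => Set.Iic sn) (fun i _ => (Set.to_countable _).measurableSet)
    have hone : ∀ i ∈ Finset.range n,
        P (k i ⁻¹' Set.Iic sn) ≤ ENNReal.ofReal (1 - 1 / (2 * ((sn : ℝ) + 1))) := by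
      intro i _
      exact rds_single_bound P (k i) (hkmeas i) (hlaw' i) sn
    have hreal : (1 - 1 / (2 * ((sn : ℝ) + 1))) ^ n ≤ Real.exp (-(sn : ℝ) / 4) := by
      set δ : ℝ := 1 / (2 * ((sn : ℝ) + 1)) with hδ
      have hδpos : 0 < δ := by rw [hδ]; positivity
      have h1 : 1 - δ ≤ Real.exp (-δ) := by
        have := Real.add_one_le_exp (-δ); linarith
      have h2 : (1 - δ) ^ n ≤ Real.exp (-δ) ^ n := pow_le_pow_left₀ hnn h1 n
      have h3 : Real.exp (-δ) ^ n = Real.exp ((n : ℝ) * (-δ)) :=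
        (Real.exp_nat_mul _ n).symm
      have hnat : sn * (sn + 1) ≤ 2 * n := by
        rcases Nat.eq_zero_or_pos sn with h | h
        · simp [h]
        · have hq := Nat.sqrt_le n
          rw [← hsn] at hq
          nlinarith
      have h4 : (n : ℝ) * (-δ) ≤ -(sn : ℝ) / 4 := by
        have hcast : ((sn : ℝ)) * ((sn : ℝ) + 1) ≤ 2 * (n : ℝ) := by
          exact_mod_cast hnat
        have hp : (0:ℝ) < 2 * ((sn : ℝ) + 1) := by positivity
        have h5 : (sn : ℝ) / 4 ≤ (n : ℝ) * δ := by
          rw [hδ, mul_one_div, div_le_div_iff₀ (by norm_num : (0:ℝ) < 4) hp]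
          nlinarith
        rw [mul_neg, neg_div]
        exact neg_le_neg h5
      calc (1 - δ) ^ n ≤ Real.exp (-δ) ^ n := h2
        _ = Real.exp ((n : ℝ) * (-δ)) := h3
        _ ≤ Real.exp (-(sn : ℝ) / 4) := Real.exp_le_exp.mpr h4
    calc P (B n) = ∏ i ∈ Finset.range n, P (k i ⁻¹' Set.Iic sn) := hprod
      _ ≤ ∏ _i ∈ Finset.range n, ENNReal.ofReal (1 - 1 / (2 * ((sn : ℝ) + 1))) :=
          Finset.prod_le_prod' hone
      _ = ENNReal.ofReal (1 - 1 / (2 * ((sn : ℝ) + 1))) ^ n := by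
          rw [Finset.prod_const, Finset.card_range]
      _ = ENNReal.ofReal ((1 - 1 / (2 * ((sn : ℝ) + 1))) ^ n) :=
          (ENNReal.ofReal_pow hnn n).symm
      _ ≤ ENNReal.ofReal (Real.exp (-(sn : ℝ) / 4)) := ENNReal.ofReal_le_ofReal hreal
  -- Borel–Cantelli
  have htsum : (∑' n, P (B n)) ≠ ∞ := by
    have hle := ENNReal.tsum_le_tsum hBbound
    have heq : (∑' n : ℕ, ENNReal.ofReal (Real.exp (-(Nat.sqrt n : ℝ) / 4))) =
        ENNReal.ofReal (∑' n : ℕ, Real.exp (-(Nat.sqrt n : ℝ) / 4)) :=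
      (ENNReal.ofReal_tsum_of_nonneg (fun n => (Real.exp_pos _).le) rds_summable_bound).symm
    exact ne_top_of_le_ne_top (by rw [heq]; exact ENNReal.ofReal_ne_top) hle
  have hae := ae_eventually_notMem htsum
  filter_upwards [hae] with ω hω
  -- eventual deterministic facts
  have htcast : Tendsto (fun n : ℕ => ((Nat.sqrt n : ℝ))) atTop atTop :=
    tendsto_natCast_atTop_atTop.comp rds_sqrt_tendsto
  have htcast1 : Tendsto (fun n : ℕ => ((Nat.sqrt n : ℝ) + 1)) atTop atTop :=
    tendsto_atTop_add_const_right _ 1 htcast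
  have hev2 : ∀ᶠ n : ℕ in atTop, 1 ≤ Nat.sqrt n := rds_sqrt_tendsto.eventually_ge_atTop 1
  have hev3 : ∀ᶠ n : ℕ in atTop,
      2 * ((Nat.sqrt n : ℝ) + 1) ^ 2 ≤ Real.exp ((Nat.sqrt n : ℝ) + 1) :=
    htcast1.eventually (rds_evexp 2 2)
  have hev4 : ∀ᶠ n : ℕ in atTop,
      2 * C ≤ Real.exp (Real.exp ((Nat.sqrt n : ℝ) + 1)) :=
    (Real.tendsto_exp_atTop.comp (Real.tendsto_exp_atTop.comp htcast1)).eventually_ge_atTop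
      (2 * C)
  have hfinal : ∀ᶠ n in atTop,
      (x + ∑ i ∈ Finset.range n,
        (-1 : ℝ) ^ (k i ω) * Real.exp (Real.exp (k i ω))) ∉ Set.Icc a b := by
    filter_upwards [hω, hev2, hev3, hev4] with n hn h2 h3 h4
    rw [hBdef] at hn
    simp only [Set.mem_iInter, Set.mem_preimage, Set.mem_Iic, not_forall, not_le] at hn
    obtain ⟨i0, hi0, hik⟩ := hn
    set sn := Nat.sqrt n with hsn
    set M : ℕ := (Finset.range n).sup (fun i => k i ω) with hM
    have hMge : sn + 1 ≤ M := le_trans (Nat.succ_le_of_lt hik) (Finset.le_sup (f := fun i => k i ω) hi0)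
    have hle : ∀ i ∈ Finset.range n, k i ω ≤ M := fun i hi => Finset.le_sup (f := fun j => k j ω) hi
    have hattain : ∃ j ∈ Finset.range n, k j ω = M := by
      obtain ⟨j, hj, hjeq⟩ := Finset.exists_mem_eq_sup (Finset.range n) ⟨i0, hi0⟩
        (fun i => k i ω)
      exact ⟨j, hj, hjeq.symm⟩
    have hdet := rds_det_bound n M (fun i => k i ω) hle hattain
    set S : ℝ := ∑ i ∈ Finset.range n, (-1 : ℝ) ^ (k i ω) * Real.exp (Real.exp (k i ω))
      with hS
    set t : ℝ := (sn : ℝ) with htdef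
    have hMt : t + 1 ≤ (M : ℝ) := by rw [htdef]; exact_mod_cast hMge
    have hn2 : 2 * (n : ℝ) ≤ 2 * (t + 1) ^ 2 := by
      have hlt : (n : ℝ) ≤ (t + 1) * (t + 1) := by
        rw [htdef, hsn]
        exact_mod_cast le_of_lt (Nat.lt_succ_sqrt n)
      nlinarith
    -- 2n ≤ exp (exp (M - 1))
    have hA : 2 * (n : ℝ) ≤ Real.exp (Real.exp ((M : ℝ) - 1)) := by
      have s1 : t + 1 ≤ Real.exp t := by
        have := Real.add_one_le_exp t; linarith
      have s2 : Real.exp ((t : ℝ) + 1) ≤ Real.exp (Real.exp t) :=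
        Real.exp_le_exp.mpr s1
      have s3 : Real.exp (Real.exp t) ≤ Real.exp (Real.exp ((M : ℝ) - 1)) :=
        Real.exp_le_exp.mpr (Real.exp_le_exp.mpr (by linarith))
      calc 2 * (n : ℝ) ≤ 2 * (t + 1) ^ 2 := hn2
        _ ≤ Real.exp (t + 1) := h3
        _ ≤ Real.exp (Real.exp t) := s2
        _ ≤ Real.exp (Real.exp ((M : ℝ) - 1)) := s3
    -- n * exp (exp (M-1)) ≤ exp (exp M) / 2
    have hB2 : (n : ℝ) * Real.exp (Real.exp ((M : ℝ) - 1)) ≤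
        Real.exp (Real.exp (M : ℝ)) / 2 := by
      set X : ℝ := Real.exp (Real.exp ((M : ℝ) - 1)) with hX
      have hXpos : 0 < X := Real.exp_pos _
      have hsq : X * X = Real.exp (2 * Real.exp ((M : ℝ) - 1)) := by
        rw [hX, ← Real.exp_add]; ring_nf
      have h2e : 2 * Real.exp ((M : ℝ) - 1) ≤ Real.exp (M : ℝ) := by
        have hexp1 : (2:ℝ) ≤ Real.exp 1 := by
          have := Real.add_one_le_exp 1; linarith
        have : Real.exp (M : ℝ) = Real.exp ((M : ℝ) - 1) * Real.exp 1 := by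
          rw [← Real.exp_add]; ring_nf
        rw [this]
        nlinarith [Real.exp_pos ((M : ℝ) - 1)]
      have hXX : X * X ≤ Real.exp (Real.exp (M : ℝ)) := by
        rw [hsq]; exact Real.exp_le_exp.mpr h2e
      nlinarith
    have habs : Real.exp (Real.exp (M : ℝ)) / 2 ≤ |S| := by
      have := hdet
      nlinarith [hB2]
    have hbig : 2 * C ≤ Real.exp (Real.exp (M : ℝ)) := by
      calc 2 * C ≤ Real.exp (Real.exp (t + 1)) := h4
        _ ≤ Real.exp (Real.exp (M : ℝ)) :=
          Real.exp_le_exp.mpr (Real.exp_le_exp.mpr hMt)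
    -- conclude
    intro hmem
    obtain ⟨hab1, hab2⟩ := hmem
    have htri : |S| - |x| ≤ |x + S| := by
      have h := abs_sub (x + S) x
      simp only [add_sub_cancel_left] at h
      linarith [h]
    have hub : |x + S| ≤ max |a| |b| := by
      rw [abs_le]
      constructor
      · have : -(max |a| |b|) ≤ -|a| := by
          simp only [neg_le_neg_iff]; exact le_max_left _ _
        have h2 : -|a| ≤ a := neg_abs_le a
        linarith
      · have h1 : b ≤ |b| := le_abs_self b
        have h2 : |b| ≤ max |a| |b| := le_max_right _ _
        linarith
    have hCS : C ≤ |S| := by linarith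
    rw [hC] at hCS
    linarith
  obtain ⟨N, hN⟩ := eventually_atTop.mp hfinal
  refine Set.Finite.subset (Set.finite_Iio N) fun n hn => ?_
  by_contra h
  exact hN n (not_lt.mp h) hn
end

section
/- Consider the RDS on ℝ generated by translations f_{±k}(x) = x ± e^{e^k}, k ≥ 1, each of f_{+k} and f_{−k} applied with probability (1/2)·1/(k(k+1)). Then for every starting point x and every compact interval J, almost surely the random orbit visits J only finitely many times; in particular the dynamics is not recurrent even though the step distribution is symmetric. -/
open MeasureTheory ProbabilityTheory Filter Set
open scoped ENNReal


lemma size_lemma (n T J : ℕ) (R : ℝ) (hR : 0 ≤ R) (hn : 1 ≤ n) (hT : 1 ≤ T) (hTJ : T < J)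
    (hTlog : 2 * Real.log ((n : ℝ) + R + 1) ≤ Real.exp (T : ℝ)) :
    (n : ℝ) * J * Real.exp (Real.exp ((J : ℝ) - 1)) + R + 1 ≤ Real.exp (Real.exp (J : ℝ)) := by
  set t := Real.exp ((J : ℝ) - 1) with ht_def
  have htpos : 0 < t := Real.exp_pos _
  have hJ1 : (1 : ℝ) ≤ (J : ℝ) := by exact_mod_cast Nat.one_le_iff_ne_zero.mpr (by omega)
  have hn1 : (1 : ℝ) ≤ (n : ℝ) := by exact_mod_cast hn
  have ht1 : (J : ℝ) ≤ t := by
    have := Real.add_one_le_exp ((J : ℝ) - 1); linarith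
  have he : (2.7 : ℝ) ≤ Real.exp 1 := le_of_lt (lt_trans (by norm_num) Real.exp_one_gt_d9)
  have hexpJ : Real.exp (J : ℝ) = Real.exp 1 * t := by
    rw [ht_def, ← Real.exp_add]; ring_nf
  have hTt : Real.exp (T : ℝ) ≤ t := by
    apply Real.exp_le_exp.mpr
    have : (T : ℝ) + 1 ≤ (J : ℝ) := by exact_mod_cast hTJ
    linarith
  have hlog0 : 0 ≤ Real.log ((n : ℝ) + R + 1) := Real.log_nonneg (by linarith)
  have h07 : Real.log ((n : ℝ) + R + 1) ≤ 0.7 * t := by nlinarith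
  have hnR : (n : ℝ) + R + 1 ≤ Real.exp (0.7 * t) := by
    calc (n : ℝ) + R + 1 = Real.exp (Real.log ((n : ℝ) + R + 1)) :=
          (Real.exp_log (by linarith)).symm
      _ ≤ Real.exp (0.7 * t) := Real.exp_le_exp.mpr h07
  have hstep : Real.exp t * Real.exp t * Real.exp (0.7 * t) ≤ Real.exp (Real.exp (J : ℝ)) := by
    rw [← Real.exp_add, ← Real.exp_add]
    apply Real.exp_le_exp.mpr
    rw [hexpJ]; nlinarith
  have hexpt1 : (J : ℝ) + 1 ≤ Real.exp t := by
    have := Real.add_one_le_exp t; linarith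
  have hexpt0 : (1 : ℝ) ≤ Real.exp t := by linarith
  have key : Real.exp t * (((J : ℝ) + 1) * ((n : ℝ) + R + 1)) ≤ Real.exp (Real.exp (J : ℝ)) := by
    calc Real.exp t * (((J : ℝ) + 1) * ((n : ℝ) + R + 1))
        ≤ Real.exp t * (Real.exp t * Real.exp (0.7 * t)) := by
          apply mul_le_mul_of_nonneg_left _ (le_of_lt (Real.exp_pos _))
          apply mul_le_mul hexpt1 hnR (by positivity) (by positivity)
      _ = Real.exp t * Real.exp t * Real.exp (0.7 * t) := by ring
      _ ≤ _ := hstep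
  nlinarith [mul_le_mul_of_nonneg_left hexpt0 (by positivity : (0:ℝ) ≤ R + 1)]

lemma det_lemma (n T : ℕ) (R : ℝ) (hR : 0 ≤ R) (hn : 1 ≤ n) (hT : 1 ≤ T)
    (hTlog : 2 * Real.log ((n : ℝ) + R + 1) ≤ Real.exp (T : ℝ))
    (k : ℕ → ℕ) (ε : ℕ → Bool)
    (hsum : |∑ i ∈ Finset.range n, (if ε i then (1:ℝ) else -1) * Real.exp (Real.exp (k i))| ≤ R) :
    ∀ j, T < j → Even (∑ i ∈ Finset.range n, if k i = j then (1:ℕ) else 0) := by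
  classical
  set c : ℕ → ℤ := fun j => ∑ i ∈ Finset.range n,
    if k i = j then (if ε i then (1:ℤ) else -1) else 0 with hc_def
  -- parity step
  have stepA : ∀ j, c j = 0 → Even (∑ i ∈ Finset.range n, if k i = j then (1:ℕ) else 0) := by
    intro j hcj
    set t : ℤ := ∑ i ∈ Finset.range n, if k i = j ∧ ε i = true then (1:ℤ) else 0 with ht_def
    set f : ℤ := ∑ i ∈ Finset.range n, if k i = j ∧ ¬(ε i = true) then (1:ℤ) else 0 with hf_def
    have hc_tf : c j = t - f := by
      rw [hc_def, ht_def, hf_def, ← Finset.sum_sub_distrib]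
      apply Finset.sum_congr rfl
      intro i _
      by_cases h1 : k i = j <;> by_cases h2 : ε i = true <;> simp [h1, h2]
    have hm_tf : ((∑ i ∈ Finset.range n, if k i = j then (1:ℕ) else 0 : ℕ) : ℤ) = t + f := by
      push_cast
      rw [ht_def, hf_def, ← Finset.sum_add_distrib]
      apply Finset.sum_congr rfl
      intro i _
      by_cases h1 : k i = j <;> by_cases h2 : ε i = true <;> simp [h1, h2]
    have htf : t = f := by omega
    have : Even ((∑ i ∈ Finset.range n, if k i = j then (1:ℕ) else 0 : ℕ) : ℤ) := by
      rw [hm_tf, htf]; exact Even.add_self f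
    exact Int.even_coe_nat _ |>.mp this
  intro j0 hj0
  by_contra hodd
  have hc0 : c j0 ≠ 0 := fun h => hodd (stepA j0 h)
  have hj0img : j0 ∈ (Finset.range n).image k := by
    have hne0 : (∑ i ∈ Finset.range n, if k i = j0 then (1:ℕ) else 0) ≠ 0 :=
      fun h => hodd (by rw [h]; exact Even.zero)
    obtain ⟨i, hi, hki⟩ : ∃ i ∈ Finset.range n, k i = j0 := by
      by_contra hno; push_neg at hno
      exact hne0 (Finset.sum_eq_zero fun i hi => by simp [hno i hi])
    exact Finset.mem_image.mpr ⟨i, hi, hki⟩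
  set Js := ((Finset.range n).image k).filter (fun j => T < j ∧ c j ≠ 0) with hJs_def
  have hne : Js.Nonempty := ⟨j0, by simp [hJs_def, Finset.mem_filter, hj0img, hj0, hc0]⟩
  set J := Js.max' hne with hJ_def
  have hJmem2 : J ∈ Js := Js.max'_mem hne
  obtain ⟨hJimg, hTJ, hcJ⟩ := Finset.mem_filter.mp hJmem2
  have hmax : ∀ j, j ∈ Js → j ≤ J := fun j hj => Finset.le_max' _ _ hj
  -- regrouping
  have hcreal : ∀ j, (c j : ℝ) = ∑ i ∈ (Finset.range n).filter (fun i => k i = j),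
      (if ε i then (1:ℝ) else -1) := by
    intro j
    rw [Finset.sum_filter, hc_def]
    push_cast
    apply Finset.sum_congr rfl
    intro i _
    by_cases h1 : k i = j <;> by_cases h2 : ε i = true <;> simp [h1, h2]
  have hregroup : (∑ i ∈ Finset.range n, (if ε i then (1:ℝ) else -1) * Real.exp (Real.exp (k i)))
      = ∑ j ∈ (Finset.range n).image k, (c j : ℝ) * Real.exp (Real.exp (j : ℕ)) := by
    rw [← Finset.sum_fiberwise_of_maps_to (fun i hi => Finset.mem_image_of_mem k hi)
      (fun i => (if ε i then (1:ℝ) else -1) * Real.exp (Real.exp (k i)))]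
    apply Finset.sum_congr rfl
    intro j _
    rw [hcreal j, Finset.sum_mul]
    apply Finset.sum_congr rfl
    intro i hi
    rw [(Finset.mem_filter.mp hi).2]
  -- bounds
  have hcbound : ∀ j, |(c j : ℝ)| ≤ (n : ℝ) := by
    intro j
    have : |c j| ≤ (n : ℤ) := by
      calc |c j| ≤ ∑ i ∈ Finset.range n, |if k i = j then (if ε i then (1:ℤ) else -1) else 0| :=
            Finset.abs_sum_le_sum_abs _ _
        _ ≤ ∑ _i ∈ Finset.range n, 1 := by
            apply Finset.sum_le_sum; intro i _
            by_cases h1 : k i = j <;> by_cases h2 : ε i = true <;> simp [h1, h2]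
        _ = (n : ℤ) := by simp
    exact_mod_cast this
  have hcJ1 : (1 : ℝ) ≤ |(c J : ℝ)| := by
    have := Int.one_le_abs hcJ
    exact_mod_cast this
  set s' := (((Finset.range n).image k).erase J).filter (fun j => c j ≠ 0) with hs'_def
  have hs'sub : s' ⊆ Finset.range J := by
    intro j hj
    rw [hs'_def, Finset.mem_filter] at hj
    obtain ⟨hje, hjc⟩ := hj
    have hjJ : j ≠ J := Finset.ne_of_mem_erase hje
    have hjimg : j ∈ (Finset.range n).image k := Finset.mem_of_mem_erase hje
    rw [Finset.mem_range]
    by_cases hTj : T < j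
    · exact lt_of_le_of_ne (hmax j (by simp [hJs_def, Finset.mem_filter, hjimg, hTj, hjc])) hjJ
    · omega
  have hrest : |∑ j ∈ ((Finset.range n).image k).erase J, (c j : ℝ) * Real.exp (Real.exp (j:ℕ))|
      ≤ (n : ℝ) * J * Real.exp (Real.exp ((J : ℝ) - 1)) := by
    have heq : ∑ j ∈ ((Finset.range n).image k).erase J, (c j : ℝ) * Real.exp (Real.exp (j:ℕ))
        = ∑ j ∈ s', (c j : ℝ) * Real.exp (Real.exp (j:ℕ)) := by
      rw [hs'_def]
      refine (Finset.sum_filter_of_ne ?_).symm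
      intro j _ hne'
      by_contra hc'
      exact hne' (by rw [hc']; simp)
    rw [heq]
    calc |∑ j ∈ s', (c j : ℝ) * Real.exp (Real.exp (j:ℕ))|
        ≤ ∑ j ∈ s', |(c j : ℝ) * Real.exp (Real.exp (j:ℕ))| := Finset.abs_sum_le_sum_abs _ _
      _ ≤ ∑ _j ∈ s', (n : ℝ) * Real.exp (Real.exp ((J : ℝ) - 1)) := by
          apply Finset.sum_le_sum
          intro j hj
          rw [abs_mul, abs_of_pos (Real.exp_pos _)]
          have hjJ : (j : ℝ) ≤ (J : ℝ) - 1 := by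
            have := Finset.mem_range.mp (hs'sub hj)
            have : j + 1 ≤ J := this
            have : ((j : ℝ) + 1) ≤ (J : ℝ) := by exact_mod_cast this
            linarith
          apply mul_le_mul (hcbound j) (Real.exp_le_exp.mpr (Real.exp_le_exp.mpr hjJ))
            (le_of_lt (Real.exp_pos _)) (Nat.cast_nonneg n)
      _ = (s'.card : ℝ) * ((n : ℝ) * Real.exp (Real.exp ((J : ℝ) - 1))) := by
          rw [Finset.sum_const, nsmul_eq_mul]
      _ ≤ (J : ℝ) * ((n : ℝ) * Real.exp (Real.exp ((J : ℝ) - 1))) := by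
          apply mul_le_mul_of_nonneg_right _ (by positivity)
          have := Finset.card_le_card hs'sub
          rw [Finset.card_range] at this
          exact_mod_cast this
      _ = (n : ℝ) * J * Real.exp (Real.exp ((J : ℝ) - 1)) := by ring
  have hsplit : ∑ j ∈ (Finset.range n).image k, (c j : ℝ) * Real.exp (Real.exp (j:ℕ))
      = (c J : ℝ) * Real.exp (Real.exp (J:ℕ))
        + ∑ j ∈ ((Finset.range n).image k).erase J, (c j : ℝ) * Real.exp (Real.exp (j:ℕ)) :=
    (Finset.add_sum_erase _ _ hJimg).symm
  have hEJ : Real.exp (Real.exp (J : ℕ)) ≤ |(c J : ℝ) * Real.exp (Real.exp (J:ℕ))| := by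
    rw [abs_mul, abs_of_pos (Real.exp_pos _)]
    nlinarith [Real.exp_pos (Real.exp (J:ℝ)), hcJ1]
  have hsize := size_lemma n T J R hR hn hT hTJ hTlog
  set A1 := (c J : ℝ) * Real.exp (Real.exp (J:ℕ)) with hA1
  set A2 := ∑ j ∈ ((Finset.range n).image k).erase J, (c j : ℝ) * Real.exp (Real.exp (j:ℕ))
    with hA2
  have habs : Real.exp (Real.exp (J:ℕ)) - (n : ℝ) * J * Real.exp (Real.exp ((J : ℝ) - 1)) ≤ R := by
    have h2 : |A1 + A2| ≤ R := by rw [← hsplit, ← hregroup]; exact hsum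
    have h3 : |A1| ≤ |A1 + A2| + |A2| := by
      have := abs_add_le (A1 + A2) (-A2)
      simpa using this
    linarith [hEJ, hrest]
  linarith

lemma law_finset {Ω : Type*} [MeasurableSpace Ω] (P : Measure Ω) [IsProbabilityMeasure P]
    (g : ℕ → Ω → ℕ × Bool) (hgmeas : ∀ n, Measurable (g n))
    (hlaw : ∀ n : ℕ, ∀ j : ℕ, ∀ s : Bool, 1 ≤ j →
      P {ω | g n ω = (j, s)} =
        (1 : ℝ≥0∞) / (2 * (j : ℝ≥0∞) * ((j : ℝ≥0∞) + 1)))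
    (i : ℕ) (B : Finset ℕ) (hB : ∀ j ∈ B, 1 ≤ j) :
    P {ω | (g i ω).1 ∈ B} = ∑ j ∈ B, ((j : ℝ≥0∞) * ((j : ℝ≥0∞) + 1))⁻¹ := by
  classical
  have hset : {ω | (g i ω).1 ∈ B}
      = ⋃ j ∈ B, ({ω | g i ω = (j, true)} ∪ {ω | g i ω = (j, false)}) := by
    ext ω
    simp only [Set.mem_setOf_eq, Set.mem_iUnion, Set.mem_union]
    constructor
    · intro h
      refine ⟨(g i ω).1, h, ?_⟩
      cases hb : (g i ω).2
      · right; rw [← hb]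
      · left; rw [← hb]
    · rintro ⟨j, hj, h | h⟩ <;> rw [h] <;> exact hj
  have hmeas : ∀ (j : ℕ) (s : Bool), MeasurableSet {ω | g i ω = (j, s)} := fun j s =>
    (hgmeas i) (measurableSet_singleton (j, s))
  rw [hset, measure_biUnion_finset]
  · apply Finset.sum_congr rfl
    intro j hj
    have hj1 := hB j hj
    have hdisj : Disjoint {ω | g i ω = (j, true)} {ω | g i ω = (j, false)} := by
      rw [Set.disjoint_left]
      intro ω h1 h2
      simp only [Set.mem_setOf_eq] at h1 h2
      rw [h1] at h2
      simpa using h2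
    rw [measure_union hdisj (hmeas j false), hlaw i j true hj1, hlaw i j false hj1]
    have hjne : ((j : ℝ≥0∞) * ((j : ℝ≥0∞) + 1)) ≠ 0 := by
      have : (1 : ℝ≥0∞) ≤ (j : ℝ≥0∞) := by exact_mod_cast hj1
      intro h
      rcases mul_eq_zero.mp h with h' | h'
      · exact (by simp [h'] at this)
      · exact (by simp at h')
    have hjtop : ((j : ℝ≥0∞) * ((j : ℝ≥0∞) + 1)) ≠ ⊤ := by
      apply ENNReal.mul_ne_top (ENNReal.natCast_ne_top j)
      exact ENNReal.add_ne_top.mpr ⟨ENNReal.natCast_ne_top j, ENNReal.one_ne_top⟩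
    rw [mul_assoc]
    rw [ENNReal.div_add_div_same]
    rw [show (1 : ℝ≥0∞) + 1 = 2 from by norm_num]
    rw [show (2 : ℝ≥0∞) / (2 * ((j : ℝ≥0∞) * ((j : ℝ≥0∞) + 1)))
          = 2 * 1 / (2 * ((j : ℝ≥0∞) * ((j : ℝ≥0∞) + 1))) from by rw [mul_one]]
    rw [ENNReal.mul_div_mul_left 1 _ (by norm_num) (by norm_num)]
    rw [one_div]
  · intro j hj j' hj' hne
    simp only [Function.onFun]
    rw [Set.disjoint_left]
    rintro ω (h | h) (h' | h') <;>
      · simp only [Set.mem_setOf_eq] at h h'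
        rw [h] at h'
        exact hne (by simpa using (Prod.ext_iff.mp h').1)
  · intro j _
    exact ((hmeas j true).union (hmeas j false))

lemma tele (M : ℕ) (hM : 1 ≤ M) :
    ∑ j ∈ Finset.Ioc 1 M, ((j : ℝ) * ((j : ℝ) + 1))⁻¹ = 1/2 - ((M : ℝ) + 1)⁻¹ := by
  induction M, hM using Nat.le_induction with
  | base => norm_num
  | succ M hM ih =>
    rw [Finset.sum_Ioc_succ_top (by omega : 1 ≤ M), ih]
    have h1 : ((M : ℝ) + 1) > 0 := by positivity
    have h2 : ((M : ℝ) + 2) > 0 := by positivity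
    push_cast
    field_simp
    ring

lemma prob_bound {Ω : Type*} [MeasurableSpace Ω] (P : Measure Ω) [IsProbabilityMeasure P]
    (g : ℕ → Ω → ℕ × Bool) (hgmeas : ∀ n, Measurable (g n))
    (hindep : iIndepFun g P)
    (hlaw : ∀ n : ℕ, ∀ j : ℕ, ∀ s : Bool, 1 ≤ j →
      P {ω | g n ω = (j, s)} =
        (1 : ℝ≥0∞) / (2 * (j : ℝ≥0∞) * ((j : ℝ≥0∞) + 1)))
    (n M : ℕ) (A : Finset ℕ) (hA : A ⊆ Finset.Ioc 1 M)
    (hA2 : ∀ j ∈ A, j * (j + 1) ≤ 2 * n) :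
    P {ω | ∀ j ∈ A, Even (∑ i ∈ Finset.range n, if (g i ω).1 = j then (1:ℕ) else 0)}
      ≤ ENNReal.ofReal ((3/4 : ℝ) ^ A.card) := by
  classical
  rcases Finset.eq_empty_or_nonempty A with hAe | hAne
  · subst hAe
    simp only [Finset.card_empty, pow_zero, ENNReal.ofReal_one]
    exact prob_le_one
  have hM1 : 1 ≤ M := by
    obtain ⟨j, hj⟩ := hAne
    have := Finset.mem_Ioc.mp (hA hj)
    omega
  -- basic objects
  set m : ℕ → Ω → ℕ := fun j ω => ∑ i ∈ Finset.range n, if (g i ω).1 = j then (1:ℕ) else 0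
    with hm_def
  set E : Set Ω := {ω | ∀ j ∈ A, Even (m j ω)} with hE_def
  have hmmeas : ∀ j, Measurable (m j) := by
    intro j
    apply Finset.measurable_sum
    intro i _
    exact Measurable.ite ((measurable_fst.comp (hgmeas i)) (measurableSet_singleton j))
      measurable_const measurable_const
  have hEmeas : MeasurableSet E := by
    have : E = ⋂ j ∈ A, (m j) ⁻¹' {r | Even r} := by
      ext ω; simp [hE_def]
    rw [this]
    exact MeasurableSet.biInter (A.countable_toSet)
      (fun j _ => (hmmeas j) ((Set.to_countable _).measurableSet))
  -- chi functions
  set χ : Finset ℕ → ℕ → Ω → ℝ :=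
    fun B i ω => if (g i ω).1 ∈ B then (-1:ℝ) else 1 with hχ_def
  have hχmeas : ∀ B i, Measurable (χ B i) := by
    intro B i
    exact Measurable.ite ((measurable_fst.comp (hgmeas i)) ((Set.to_countable _).measurableSet))
      measurable_const measurable_const
  have hχabs : ∀ B i ω, |χ B i ω| = 1 := by
    intro B i ω
    by_cases h : (g i ω).1 ∈ B <;> simp [hχ_def, h]
  have hprodmeas : ∀ B : Finset ℕ, Measurable (fun ω => ∏ i ∈ Finset.range n, χ B i ω) :=
    fun B => Finset.measurable_prod _ (fun i _ => hχmeas B i)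
  have hprodint : ∀ B : Finset ℕ, Integrable (fun ω => ∏ i ∈ Finset.range n, χ B i ω) P := by
    intro B
    apply Integrable.mono' (integrable_const (1:ℝ)) (hprodmeas B).aestronglyMeasurable
    apply ae_of_all
    intro ω
    rw [Real.norm_eq_abs, Finset.abs_prod]
    have : ∏ i ∈ Finset.range n, |χ B i ω| = ∏ i ∈ Finset.range n, (1:ℝ) :=
      Finset.prod_congr rfl (fun i _ => hχabs B i ω)
    rw [this, Finset.prod_const_one]
  -- probabilities
  set pR : ℕ → ℝ := fun j => ((j : ℝ) * ((j : ℝ) + 1))⁻¹ with hpR_def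
  have hpR0 : ∀ j, 0 ≤ pR j := by
    intro j; rw [hpR_def]; positivity
  have hPB : ∀ (i : ℕ) (B : Finset ℕ), B ∈ A.powerset →
      (P {ω | (g i ω).1 ∈ B}).toReal = ∑ j ∈ B, pR j := by
    intro i B hB
    have hBsub := Finset.mem_powerset.mp hB
    have hB1 : ∀ j ∈ B, 1 ≤ j := fun j hj => by
      have := Finset.mem_Ioc.mp (hA (hBsub hj)); omega
    rw [law_finset P g hgmeas hlaw i B hB1]
    rw [ENNReal.toReal_sum]
    · apply Finset.sum_congr rfl
      intro j hj
      rw [show ((j : ℝ≥0∞) * ((j : ℝ≥0∞) + 1)) = ((j * (j+1) : ℕ) : ℝ≥0∞) from by push_cast; ring]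
      rw [ENNReal.toReal_inv, ENNReal.toReal_natCast, hpR_def]
      push_cast
      ring_nf
    · intro j hjB
      apply ENNReal.inv_ne_top.mpr
      intro h
      rcases mul_eq_zero.mp h with h' | h'
      · rw [show ((j:ℝ≥0∞) = 0) ↔ (j = 0) from Nat.cast_eq_zero] at h'
        have := hB1 j hjB
        omega
      · simp at h'
  -- single-step integral
  have hInt1 : ∀ (i : ℕ) (B : Finset ℕ), B ∈ A.powerset →
      ∫ ω, χ B i ω ∂P = 1 - 2 * ∑ j ∈ B, pR j := by
    intro i B hB
    have hmeasB : MeasurableSet {ω | (g i ω).1 ∈ B} :=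
      (measurable_fst.comp (hgmeas i)) ((Set.to_countable _).measurableSet)
    have heq : (fun ω => χ B i ω)
        = fun ω => 1 - 2 * Set.indicator {ω' | (g i ω').1 ∈ B} (1 : Ω → ℝ) ω := by
      funext ω
      by_cases h : (g i ω).1 ∈ B
      · rw [Set.indicator_of_mem (show ω ∈ {ω' | (g i ω').1 ∈ B} from h)]
        simp [hχ_def, h]; norm_num
      · rw [Set.indicator_of_notMem (show ω ∉ {ω' | (g i ω').1 ∈ B} from h)]
        simp [hχ_def, h]
    have hind : Integrable (Set.indicator {ω' | (g i ω').1 ∈ B} (1 : Ω → ℝ)) P :=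
      (integrable_const (1:ℝ)).indicator hmeasB
    rw [heq, integral_sub (integrable_const 1) (hind.const_mul 2), integral_const,
      integral_const_mul, integral_indicator_one hmeasB, measureReal_def, measureReal_def, hPB i B hB]
    simp [measure_univ]
  -- independence of chi's
  have hχindep : ∀ B : Finset ℕ,
      iIndepFun (χ B) P := by
    intro B
    exact hindep.comp (fun _ => fun p : ℕ × Bool => if p.1 ∈ B then (-1:ℝ) else 1)
      (fun _ => measurable_of_countable _)
  -- product integral
  have hIntProd : ∀ B ∈ A.powerset,
      ∫ ω, ∏ i ∈ Finset.range n, χ B i ω ∂P = (1 - 2 * ∑ j ∈ B, pR j) ^ n := by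
    intro B hB
    have hfn : ∀ N : ℕ, (∏ i ∈ Finset.range N, χ B i) = fun ω => ∏ i ∈ Finset.range N, χ B i ω :=
      fun N => funext (fun ω => Finset.prod_apply ω (Finset.range N) (χ B))
    have key : ∀ N : ℕ, ∫ ω, ∏ i ∈ Finset.range N, χ B i ω ∂P
        = ∏ i ∈ Finset.range N, ∫ ω, χ B i ω ∂P := by
      intro N
      induction N with
      | zero => simp
      | succ N ih =>
        have hfun : (fun ω => ∏ i ∈ Finset.range (N+1), χ B i ω)
            = (∏ i ∈ Finset.range N, χ B i) * (χ B N) := by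
          funext ω
          rw [Finset.prod_range_succ]
          rw [Pi.mul_apply, hfn N]
        have hIndep2 : IndepFun (∏ i ∈ Finset.range N, χ B i) (χ B N) P :=
          (hχindep B).indepFun_prod_range_succ (fun i => hχmeas B i) N
        have hXmeas : Measurable (∏ i ∈ Finset.range N, χ B i) := by
          rw [hfn N]
          exact Finset.measurable_prod _ (fun i _ => hχmeas B i)
        calc ∫ ω, ∏ i ∈ Finset.range (N+1), χ B i ω ∂P
            = ∫ ω, ((∏ i ∈ Finset.range N, χ B i) * (χ B N)) ω ∂P := by rw [hfun]
          _ = (∫ ω, (∏ i ∈ Finset.range N, χ B i) ω ∂P) * ∫ ω, χ B N ω ∂P :=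
              hIndep2.integral_mul_eq_mul_integral hXmeas.aestronglyMeasurable (hχmeas B N).aestronglyMeasurable
          _ = (∏ i ∈ Finset.range N, ∫ ω, χ B i ω ∂P) * ∫ ω, χ B N ω ∂P := by
              rw [show (∫ ω, (∏ i ∈ Finset.range N, χ B i) ω ∂P)
                  = ∫ ω, ∏ i ∈ Finset.range N, χ B i ω ∂P from by rw [hfn N], ih]
          _ = ∏ i ∈ Finset.range (N+1), ∫ ω, χ B i ω ∂P := (Finset.prod_range_succ _ N).symm
    rw [key n]
    rw [Finset.prod_congr rfl (fun i _ => hInt1 i B hB), Finset.prod_const, Finset.card_range]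
  -- pointwise identity
  have hpoint : ∀ ω, Set.indicator E (1 : Ω → ℝ) ω
      = (2:ℝ)⁻¹ ^ A.card * ∑ B ∈ A.powerset, ∏ i ∈ Finset.range n, χ B i ω := by
    intro ω
    have hswap : ∀ B : Finset ℕ,
        (∑ i ∈ Finset.range n, if (g i ω).1 ∈ B then (1:ℕ) else 0) = ∑ j ∈ B, m j ω := by
      intro B
      rw [hm_def]
      simp only
      rw [Finset.sum_comm]
      apply Finset.sum_congr rfl
      intro i _
      rw [Finset.sum_ite_eq]
    have hprodB : ∀ B : Finset ℕ,
        ∏ i ∈ Finset.range n, χ B i ω = ∏ j ∈ B, (-1:ℝ) ^ (m j ω) := by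
      intro B
      have h1 : ∀ i, χ B i ω = (-1:ℝ) ^ (if (g i ω).1 ∈ B then (1:ℕ) else 0) := by
        intro i; by_cases h : (g i ω).1 ∈ B <;> simp [hχ_def, h]
      calc ∏ i ∈ Finset.range n, χ B i ω
          = ∏ i ∈ Finset.range n, (-1:ℝ) ^ (if (g i ω).1 ∈ B then (1:ℕ) else 0) :=
            Finset.prod_congr rfl (fun i _ => h1 i)
        _ = (-1:ℝ) ^ (∑ i ∈ Finset.range n, if (g i ω).1 ∈ B then (1:ℕ) else 0) :=
            Finset.prod_pow_eq_pow_sum _ _ _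
        _ = (-1:ℝ) ^ (∑ j ∈ B, m j ω) := by rw [hswap B]
        _ = ∏ j ∈ B, (-1:ℝ) ^ (m j ω) := (Finset.prod_pow_eq_pow_sum _ _ _).symm
    have hsum2 : ∑ B ∈ A.powerset, ∏ i ∈ Finset.range n, χ B i ω
        = ∏ j ∈ A, ((-1:ℝ) ^ (m j ω) + 1) := by
      rw [Finset.prod_add]
      simp only [Finset.prod_const_one, mul_one]
      exact Finset.sum_congr rfl (fun B _ => hprodB B)
    by_cases hω : ω ∈ E
    · rw [Set.indicator_of_mem hω]
      have hev : ∀ j ∈ A, (-1:ℝ) ^ (m j ω) = 1 := fun j hj => Even.neg_one_pow (hω j hj)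
      have h22 : ∏ j ∈ A, ((-1:ℝ) ^ (m j ω) + 1) = ∏ j ∈ A, (2:ℝ) :=
        Finset.prod_congr rfl (fun j hj => by rw [hev j hj]; norm_num)
      rw [hsum2, h22, Finset.prod_const, ← mul_pow]
      norm_num
    · rw [Set.indicator_of_notMem hω]
      rw [hE_def] at hω
      simp only [Set.mem_setOf_eq, not_forall] at hω
      obtain ⟨j, hj, hodd⟩ := hω
      have : (-1:ℝ) ^ (m j ω) + 1 = 0 := by
        rw [Odd.neg_one_pow (Nat.not_even_iff_odd.mp hodd)]; ring
      rw [hsum2, Finset.prod_eq_zero hj this, mul_zero]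
  -- compute (P E).toReal
  have hPEtoReal : (P E).toReal
      = (2:ℝ)⁻¹ ^ A.card * ∑ B ∈ A.powerset, (1 - 2 * ∑ j ∈ B, pR j) ^ n := by
    have h0 : (P E).toReal = ∫ ω, Set.indicator E (1 : Ω → ℝ) ω ∂P := by
      rw [integral_indicator_one hEmeas, measureReal_def]
    rw [h0, show (fun ω => Set.indicator E (1 : Ω → ℝ) ω)
        = fun ω => (2:ℝ)⁻¹ ^ A.card * ∑ B ∈ A.powerset, ∏ i ∈ Finset.range n, χ B i ω
        from funext hpoint]
    rw [integral_const_mul, integral_finset_sum _ (fun B _ => hprodint B)]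
    rw [Finset.sum_congr rfl (fun B hB => hIntProd B hB)]
  -- final bounds
  set r : ℕ → ℝ := fun j => Real.exp (-(2 * (n:ℝ) * pR j)) with hr_def
  have hq : ∀ B ∈ A.powerset, 0 ≤ ∑ j ∈ B, pR j ∧ (∑ j ∈ B, pR j) ≤ 1/2 := by
    intro B hB
    have hBsub := Finset.mem_powerset.mp hB
    constructor
    · exact Finset.sum_nonneg (fun j _ => hpR0 j)
    · calc ∑ j ∈ B, pR j ≤ ∑ j ∈ Finset.Ioc 1 M, pR j :=
            Finset.sum_le_sum_of_subset_of_nonneg (fun j hj => hA (hBsub hj))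
              (fun j _ _ => hpR0 j)
        _ = 1/2 - ((M:ℝ) + 1)⁻¹ := tele M hM1
        _ ≤ 1/2 := by
            have : (0:ℝ) ≤ ((M:ℝ) + 1)⁻¹ := by positivity
            linarith
  have hterm : ∀ B ∈ A.powerset, (1 - 2 * ∑ j ∈ B, pR j) ^ n ≤ ∏ j ∈ B, r j := by
    intro B hB
    obtain ⟨hq0, hq2⟩ := hq B hB
    calc (1 - 2 * ∑ j ∈ B, pR j) ^ n ≤ (Real.exp (-(2 * ∑ j ∈ B, pR j))) ^ n := by
          apply pow_le_pow_left₀ (by linarith)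
          have := Real.add_one_le_exp (-(2 * ∑ j ∈ B, pR j))
          linarith
      _ = Real.exp ((n:ℝ) * -(2 * ∑ j ∈ B, pR j)) := (Real.exp_nat_mul _ n).symm
      _ = Real.exp (∑ j ∈ B, -(2 * (n:ℝ) * pR j)) := by
          congr 1
          rw [Finset.sum_neg_distrib, ← Finset.mul_sum]
          ring
      _ = ∏ j ∈ B, r j := by rw [Real.exp_sum]
  have hr12 : ∀ j ∈ A, r j ≤ 1/2 := by
    intro j hj
    have hj2 : 1 < j := (Finset.mem_Ioc.mp (hA hj)).1
    have hjn := hA2 j hj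
    have hpos : (0:ℝ) < (j:ℝ) * ((j:ℝ) + 1) := by
      have : (1:ℝ) ≤ (j:ℝ) := by exact_mod_cast hj2.le
      nlinarith
    have h2n : (1:ℝ) ≤ 2 * (n:ℝ) * pR j := by
      rw [hpR_def]
      rw [show 2 * (n:ℝ) * ((j:ℝ) * ((j:ℝ)+1))⁻¹ = 2 * (n:ℝ) / ((j:ℝ) * ((j:ℝ)+1)) from by ring]
      rw [le_div_iff₀ hpos]
      have : ((j * (j+1) : ℕ) : ℝ) ≤ ((2 * n : ℕ) : ℝ) := by exact_mod_cast hjn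
      push_cast at this
      linarith
    have he2 : (2:ℝ) ≤ Real.exp 1 := le_of_lt (lt_trans (by norm_num) Real.exp_one_gt_d9)
    calc r j ≤ Real.exp (-1) := Real.exp_le_exp.mpr (by linarith)
      _ ≤ 1/2 := by
          rw [Real.exp_neg]
          rw [show (1:ℝ)/2 = 2⁻¹ from by norm_num]
          exact inv_anti₀ (by norm_num) he2
  have hfinal : (P E).toReal ≤ (3/4:ℝ) ^ A.card := by
    rw [hPEtoReal]
    have hstep1 : ∑ B ∈ A.powerset, (1 - 2 * ∑ j ∈ B, pR j) ^ n
        ≤ ∑ B ∈ A.powerset, ∏ j ∈ B, r j := Finset.sum_le_sum hterm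
    have hstep2 : ∑ B ∈ A.powerset, ∏ j ∈ B, r j = ∏ j ∈ A, (r j + 1) := by
      rw [Finset.prod_add]
      simp only [Finset.prod_const_one, mul_one]
    have hstep3 : ∏ j ∈ A, (r j + 1) ≤ ∏ j ∈ A, (3/2 : ℝ) := by
      apply Finset.prod_le_prod
      · intro j _; positivity
      · intro j hj; have := hr12 j hj; linarith
    calc (2:ℝ)⁻¹ ^ A.card * ∑ B ∈ A.powerset, (1 - 2 * ∑ j ∈ B, pR j) ^ n
        ≤ (2:ℝ)⁻¹ ^ A.card * ((3/2:ℝ) ^ A.card) := by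
          apply mul_le_mul_of_nonneg_left _ (by positivity)
          calc ∑ B ∈ A.powerset, (1 - 2 * ∑ j ∈ B, pR j) ^ n
              ≤ ∏ j ∈ A, (r j + 1) := by rw [← hstep2]; exact hstep1
            _ ≤ ∏ j ∈ A, (3/2 : ℝ) := hstep3
            _ = (3/2:ℝ) ^ A.card := Finset.prod_const _
      _ = (3/4:ℝ) ^ A.card := by rw [← mul_pow]; norm_num
  calc P E = ENNReal.ofReal ((P E).toReal) := (ENNReal.ofReal_toReal (measure_ne_top P E)).symm
    _ ≤ ENNReal.ofReal ((3/4:ℝ) ^ A.card) := ENNReal.ofReal_le_ofReal hfinal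

lemma pow34 (n : ℕ) (hn : 2 ≤ n) :
    ((3:ℝ)/4) ^ (14 * Nat.log 2 n) ≤ ((n:ℝ))⁻¹ ^ 2 := by
  set l := Nat.log 2 n with hl
  have hl1 : 1 ≤ l := Nat.le_log_of_pow_le (by norm_num) (by simpa using hn)
  have hncast : (n:ℝ) ≤ (2:ℝ) ^ (l + 1) := by
    have h := (Nat.lt_pow_succ_log_self (by norm_num : 1 < 2) n).le
    exact_mod_cast h
  have hn2 : (n:ℝ) ^ 2 ≤ (4:ℝ) ^ (l + 1) := by
    calc (n:ℝ)^2 ≤ ((2:ℝ)^(l+1))^2 := pow_le_pow_left₀ (Nat.cast_nonneg n) hncast 2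
      _ = ((2:ℝ)^2)^(l+1) := by rw [← pow_mul, ← pow_mul, Nat.mul_comm]
      _ = (4:ℝ)^(l+1) := by norm_num
  have hkey : ((3:ℝ)/4) ^ (14*l) * (4:ℝ)^(l+1) ≤ 1 := by
    have he : ((3:ℝ)/4) ^ (14*l) * (4:ℝ)^(l+1) = (((3:ℝ)/4)^14 * 4)^l * 4 := by
      rw [mul_pow, pow_mul, pow_succ 4 l, mul_assoc]
    rw [he]
    have h14 : ((3:ℝ)/4)^14 * 4 ≤ 1/4 := by norm_num
    calc (((3:ℝ)/4)^14 * 4)^l * 4 ≤ ((1:ℝ)/4)^l * 4 := by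
          apply mul_le_mul_of_nonneg_right _ (by norm_num)
          exact pow_le_pow_left₀ (by positivity) h14 l
      _ ≤ ((1:ℝ)/4)^1 * 4 := by
          apply mul_le_mul_of_nonneg_right _ (by norm_num)
          exact pow_le_pow_of_le_one (by norm_num) (by norm_num) hl1
      _ = 1 := by norm_num
  have h2 : (0:ℝ) < (n:ℝ)^2 := by
    have : (0:ℝ) < (n:ℝ) := by exact_mod_cast (by omega : 0 < n)
    positivity
  rw [inv_pow, ← one_div, le_div_iff₀ h2]
  calc ((3:ℝ)/4) ^ (14*l) * (n:ℝ)^2 ≤ ((3:ℝ)/4) ^ (14*l) * (4:ℝ)^(l+1) :=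
        mul_le_mul_of_nonneg_left hn2 (by positivity)
    _ ≤ 1 := hkey

set_option maxHeartbeats 1000000 in
lemma event_good (R : ℝ) (hR : 0 ≤ R) : ∀ᶠ n : ℕ in Filter.atTop,
    (⌈Real.log (2 * Real.log ((n:ℝ) + R + 1) + 1)⌉₊ + 1) + 14 * Nat.log 2 n ≤ Nat.sqrt n := by
  set C : ℝ := 124 + 2 * Real.log (R + 2) with hC
  have hlogR0 : 0 ≤ Real.log (R+2) := Real.log_nonneg (by linarith)
  have hC0 : 0 < C := by linarith
  rw [Filter.eventually_atTop]
  refine ⟨max 1 ⌈C^4⌉₊, fun n hn => ?_⟩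
  have hn1 : 1 ≤ n := le_trans (le_max_left _ _) hn
  have hnC : (C:ℝ)^4 ≤ (n:ℝ) := by
    calc C^4 ≤ (⌈C^4⌉₊ : ℝ) := Nat.le_ceil _
      _ ≤ n := Nat.cast_le.mpr (le_trans (le_max_right _ _) hn)
  have hn0 : (1:ℝ) ≤ (n:ℝ) := by exact_mod_cast hn1
  set L := Real.log ((n:ℝ) + R + 1) with hL
  have hL0 : 0 ≤ L := Real.log_nonneg (by linarith)
  have hlogn0 : 0 ≤ Real.log n := Real.log_nonneg hn0
  have h1 : (⌈Real.log (2*L+1)⌉₊ : ℝ) ≤ Real.log (2*L+1) + 1 :=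
    (Nat.ceil_lt_add_one (Real.log_nonneg (by linarith))).le
  have h2 : Real.log (2*L+1) ≤ 2*L := by
    have := Real.log_le_sub_one_of_pos (show (0:ℝ) < 2*L+1 by linarith)
    linarith
  have h3 : L ≤ Real.log n + Real.log (R+2) := by
    have harg : (n:ℝ) + R + 1 ≤ (n:ℝ) * (R + 2) := by nlinarith
    calc L ≤ Real.log ((n:ℝ)*(R+2)) := Real.log_le_log (by linarith) harg
      _ = Real.log n + Real.log (R+2) := Real.log_mul (by linarith) (by linarith)
  have h4 : (Nat.log 2 n : ℝ) ≤ 2 * Real.log n := by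
    have hp : (2:ℝ)^(Nat.log 2 n) ≤ (n:ℝ) := by
      exact_mod_cast Nat.pow_log_le_self 2 (by omega)
    have hlq := Real.log_le_log (by positivity) hp
    rw [Real.log_pow] at hlq
    have hl2 : (1:ℝ)/2 ≤ Real.log 2 := by
      have := Real.log_two_gt_d9; linarith
    nlinarith [(show (0:ℝ) ≤ ((Nat.log 2 n : ℕ) : ℝ) from Nat.cast_nonneg _)]
  set u := Real.sqrt (Real.sqrt (n:ℝ)) with hu
  have hsn0 : 0 ≤ Real.sqrt (n:ℝ) := Real.sqrt_nonneg _
  have hu0 : 0 ≤ u := Real.sqrt_nonneg _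
  have hu2 : u^2 = Real.sqrt (n:ℝ) := Real.sq_sqrt hsn0
  have hu4 : (u^2)^2 = (n:ℝ) := by rw [hu2]; exact Real.sq_sqrt (by linarith)
  have hsn1 : 1 ≤ Real.sqrt (n:ℝ) := by
    rw [show (1:ℝ) = Real.sqrt 1 from (Real.sqrt_one).symm]
    exact Real.sqrt_le_sqrt (by linarith)
  have hu1 : 1 ≤ u := by
    rw [hu, show (1:ℝ) = Real.sqrt 1 from (Real.sqrt_one).symm]
    exact Real.sqrt_le_sqrt (by linarith)
  have h5 : Real.log n ≤ 4 * u := by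
    have hlogu : Real.log (n:ℝ) = 4 * Real.log u := by
      rw [show (n:ℝ) = u^4 from by nlinarith [hu4], Real.log_pow]
      push_cast; ring
    rw [hlogu]
    have := Real.log_le_sub_one_of_pos (show (0:ℝ) < u by linarith)
    linarith
  have h6 : Real.sqrt (n:ℝ) ≤ (Nat.sqrt n : ℝ) + 1 := by
    have hlt := Nat.lt_succ_sqrt n
    have hcast : (n:ℝ) < ((Nat.sqrt n : ℝ) + 1)^2 := by
      have : (n:ℝ) < ((Nat.sqrt n + 1 : ℕ) : ℝ) * ((Nat.sqrt n + 1 : ℕ) : ℝ) := by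
        exact_mod_cast hlt
      push_cast at this
      nlinarith
    exact ((Real.sqrt_lt' (by positivity)).mpr hcast).le
  have hCu : C ≤ u := by
    have h44 : C^4 ≤ u^4 := by
      calc C^4 ≤ (n:ℝ) := hnC
        _ = (u^2)^2 := hu4.symm
        _ = u^4 := by ring
    exact (pow_le_pow_iff_left₀ hC0.le hu0 (by norm_num)).mp h44
  have hfinal : (((⌈Real.log (2*L+1)⌉₊ + 1) + 14 * Nat.log 2 n : ℕ) : ℝ)
      ≤ ((Nat.sqrt n : ℕ) : ℝ) := by
    push_cast
    have hp1 : C * u ≤ u * u := mul_le_mul_of_nonneg_right hCu hu0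
    rw [hC] at hp1
    have hp2 : 2*Real.log (R+2) * 1 ≤ 2*Real.log (R+2) * u :=
      mul_le_mul_of_nonneg_left hu1 (by linarith)
    nlinarith [hp1, hp2, h1, h2, h3, h4, h5, h6, hu2, hu1]
  exact Nat.cast_le.mp hfinal


/-- for the symmetric RDS of translations f_{±k}(x) = x ± e^{e^k} applied
with probabilities (1/2)·1/(k(k+1)) each, every orbit almost surely visits each compact
interval only finitely many times: the dynamics is not recurrent despite symmetry. -/
theorem rds_symmetric_monster_finitely_many_visits
    {Ω : Type*} [MeasurableSpace Ω] (P : Measure Ω) [IsProbabilityMeasure P]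
    (g : ℕ → Ω → ℕ × Bool) (hgmeas : ∀ n, Measurable (g n))
    (hindep : iIndepFun g P)
    (hlaw : ∀ n : ℕ, ∀ j : ℕ, ∀ s : Bool, 1 ≤ j →
      P {ω | g n ω = (j, s)} =
        (1 : ℝ≥0∞) / (2 * (j : ℝ≥0∞) * ((j : ℝ≥0∞) + 1))) :
    ∀ x a b : ℝ, ∀ᵐ ω ∂P,
      {n : ℕ | (x + ∑ i ∈ Finset.range n,
        (if (g i ω).2 then (1 : ℝ) else -1) * Real.exp (Real.exp ((g i ω).1))) ∈
          Set.Icc a b}.Finite := by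
  intro x a b
  classical
  set R : ℝ := |a - x| + |b - x| with hR_def
  have hR : 0 ≤ R := by positivity
  set T : ℕ → ℕ := fun n => ⌈Real.log (2 * Real.log ((n:ℝ) + R + 1) + 1)⌉₊ + 1 with hT_def
  set s : ℕ → Set Ω := fun n => {ω | (x + ∑ i ∈ Finset.range n,
      (if (g i ω).2 then (1:ℝ) else -1) * Real.exp (Real.exp ((g i ω).1))) ∈ Set.Icc a b}
    with hs_def
  have hincl : ∀ n, 1 ≤ n → s n ⊆ {ω | ∀ j ∈ Finset.Ioc (T n) (T n + 14 * Nat.log 2 n),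
      Even (∑ i ∈ Finset.range n, if (g i ω).1 = j then (1:ℕ) else 0)} := by
    intro n hn ω hω
    have hT1 : 1 ≤ T n := Nat.le_add_left 1 _
    have hn0 : (0:ℝ) ≤ (n:ℝ) := Nat.cast_nonneg n
    have hL0 : 0 ≤ Real.log ((n:ℝ) + R + 1) := Real.log_nonneg (by linarith)
    have hTlog : 2 * Real.log ((n:ℝ) + R + 1) ≤ Real.exp ((T n : ℕ) : ℝ) := by
      have h1 : Real.log (2 * Real.log ((n:ℝ) + R + 1) + 1) ≤ ((T n : ℕ) : ℝ) := by
        rw [hT_def]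
        push_cast
        have := Nat.le_ceil (Real.log (2 * Real.log ((n:ℝ) + R + 1) + 1))
        linarith
      calc 2 * Real.log ((n:ℝ) + R + 1) ≤ 2 * Real.log ((n:ℝ) + R + 1) + 1 := by linarith
        _ = Real.exp (Real.log (2 * Real.log ((n:ℝ) + R + 1) + 1)) :=
            (Real.exp_log (by linarith)).symm
        _ ≤ Real.exp ((T n : ℕ) : ℝ) := Real.exp_le_exp.mpr h1
    have hmem : a ≤ x + ∑ i ∈ Finset.range n,
        (if (g i ω).2 then (1:ℝ) else -1) * Real.exp (Real.exp ((g i ω).1)) ∧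
        x + ∑ i ∈ Finset.range n,
        (if (g i ω).2 then (1:ℝ) else -1) * Real.exp (Real.exp ((g i ω).1)) ≤ b := hω
    obtain ⟨h1, h2⟩ := hmem
    have hsum : |∑ i ∈ Finset.range n,
        (if (g i ω).2 then (1:ℝ) else -1) * Real.exp (Real.exp ((g i ω).1))| ≤ R := by
      rw [abs_le, hR_def]
      constructor
      · have := neg_abs_le (a - x)
        have := abs_nonneg (b - x)
        linarith
      · have := le_abs_self (b - x)
        have := abs_nonneg (a - x)
        linarith
    intro j hj
    exact det_lemma n (T n) R hR hn hT1 hTlog (fun i => (g i ω).1) (fun i => (g i ω).2)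
      hsum j (Finset.mem_Ioc.mp hj).1
  obtain ⟨N, hN⟩ := Filter.eventually_atTop.mp
    ((event_good R hR).and (Filter.eventually_ge_atTop 2))
  have hbound : ∀ n, N ≤ n → P (s n) ≤ ENNReal.ofReal (((n:ℝ))⁻¹ ^ 2) := by
    intro n hn
    obtain ⟨hgood', hn2⟩ := hN n hn
    have hgood : T n + 14 * Nat.log 2 n ≤ Nat.sqrt n := hgood'
    calc P (s n) ≤ P {ω | ∀ j ∈ Finset.Ioc (T n) (T n + 14 * Nat.log 2 n),
          Even (∑ i ∈ Finset.range n, if (g i ω).1 = j then (1:ℕ) else 0)} :=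
          measure_mono (hincl n (by omega))
      _ ≤ ENNReal.ofReal ((3/4:ℝ) ^ (Finset.Ioc (T n) (T n + 14 * Nat.log 2 n)).card) := by
          apply prob_bound P g hgmeas hindep hlaw n (T n + 14 * Nat.log 2 n)
          · refine Finset.Ioc_subset_Ioc ?_ (le_refl _)
            simp only [hT_def]
            omega
          · intro j hj
            have hjle : j ≤ T n + 14 * Nat.log 2 n := (Finset.mem_Ioc.mp hj).2
            have hjs : j ≤ Nat.sqrt n := le_trans hjle hgood
            have hjj : j * j ≤ n := Nat.le_sqrt.mp hjs
            have hjn : j ≤ n := le_trans hjs (Nat.sqrt_le_self n)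
            calc j * (j+1) = j*j + j := by ring
              _ ≤ n + n := Nat.add_le_add hjj hjn
              _ = 2 * n := by ring
      _ ≤ ENNReal.ofReal (((n:ℝ))⁻¹ ^ 2) := by
          apply ENNReal.ofReal_le_ofReal
          rw [Nat.card_Ioc]
          rw [show T n + 14 * Nat.log 2 n - T n = 14 * Nat.log 2 n from by omega]
          exact pow34 n hn2
  have hsummable : Summable (fun n : ℕ => ((n:ℝ))⁻¹ ^ 2) := by
    have h := Real.summable_one_div_nat_pow.mpr (show 1 < 2 by norm_num)
    apply h.congr
    intro n
    rw [inv_pow, one_div]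
  have htsum : (∑' n, P (s n)) ≠ ⊤ := by
    have hle : ∀ n : ℕ, P (s n)
        ≤ (if n < N then 1 else 0) + ENNReal.ofReal (((n:ℝ))⁻¹ ^ 2) := by
      intro n
      by_cases h : n < N
      · simp only [h, if_true]
        exact le_trans prob_le_one le_self_add
      · simp only [h, if_false, zero_add]
        exact hbound n (by omega)
    have hfin : (∑' n : ℕ, ((if n < N then (1:ℝ≥0∞) else 0)
        + ENNReal.ofReal (((n:ℝ))⁻¹ ^ 2))) < ⊤ := by
      rw [ENNReal.tsum_add, ENNReal.add_lt_top]
      constructor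
      · have heq : (∑' n : ℕ, (if n < N then (1:ℝ≥0∞) else 0))
            = ∑ n ∈ Finset.range N, (if n < N then (1:ℝ≥0∞) else 0) := by
          apply tsum_eq_sum
          intro n hn
          rw [Finset.mem_range] at hn
          simp [hn]
        rw [heq]
        calc ∑ n ∈ Finset.range N, (if n < N then (1:ℝ≥0∞) else 0)
            ≤ ∑ _n ∈ Finset.range N, (1:ℝ≥0∞) := by
              apply Finset.sum_le_sum
              intro i _
              split <;> simp
          _ = (N : ℝ≥0∞) := by simp
          _ < ⊤ := ENNReal.natCast_lt_top N
      · rw [← ENNReal.ofReal_tsum_of_nonneg (fun n => by positivity) hsummable]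
        exact ENNReal.ofReal_lt_top
    exact ne_top_of_le_ne_top hfin.ne (ENNReal.tsum_le_tsum hle)
  filter_upwards [MeasureTheory.ae_eventually_notMem htsum] with ω hω
  obtain ⟨N', hN'⟩ := Filter.eventually_atTop.mp hω
  apply Set.Finite.subset (Set.finite_Iio N')
  intro n hn
  rw [Set.mem_Iio]
  by_contra h
  push_neg at h
  exact hN' n h hn
end

section
/- Let an RDS on ℝ be given by a finitely supported probability measure μ on Homeo⁺(ℝ) with weights p_i on maps f_i, and suppose φ₊(x) = P(F_n(x) → +∞) is not constant. Then the Stieltjes measure ν defined by ν([x, y]) = φ₊(y) − φ₊(x) (for continuity points x ≤ y of φ₊, extended as the Lebesgue–Stieltjes measure of φ₊) is a nonzero stationary measure for the inverse dynamics: ν = Σ_i p_i (f_i⁻¹)_* ν. -/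
open MeasureTheory ProbabilityTheory Filter Set
open scoped ENNReal Topology

namespace RdsAux13

variable {ι : Type*}

/-- Iteration of the maps along a sequence of labels. -/
def iter (f : ι → ℝ → ℝ) (u : ℕ → ι) : ℕ → ℝ → ℝ
  | 0, y => y
  | n + 1, y => f (u n) (iter f u n y)

section meas

variable [MeasurableSpace ι] [Countable ι] [MeasurableSingletonClass ι]

lemma measurable_iter (f : ι → ℝ → ℝ) (hf : ∀ i, Monotone (f i)) (n : ℕ) (y : ℝ) :
    Measurable (fun u : ℕ → ι => iter f u n y) := by
  induction n with
  | zero => exact measurable_const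
  | succ n ih =>
      have h : (fun u : ℕ → ι => iter f u (n + 1) y)
          = (fun p : (ℕ → ι) × ι => f p.2 (iter f p.1 n y)) ∘ (fun u => (u, u n)) := rfl
      rw [h]
      exact (measurable_from_prod_countable_left
        fun i => (hf i).measurable.comp ih).comp
        (measurable_id.prodMk (measurable_pi_apply n))

lemma measurableSet_all (s : Set ι) : MeasurableSet s :=
  s.to_countable.measurableSet

/-- The set of label sequences whose iteration at `y` tends to `+∞`. -/
def Tset (f : ι → ℝ → ℝ) (y : ℝ) : Set (ℕ → ι) :=
  {u | Tendsto (fun n => iter f u n y) atTop atTop}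

lemma measurableSet_Tset (f : ι → ℝ → ℝ) (hf : ∀ i, Monotone (f i)) (y : ℝ) :
    MeasurableSet (Tset f y) :=
  measurableSet_tendsto atTop (fun n => measurable_iter f hf n y)

end meas

section shift

variable {Ω : Type*} [MeasurableSpace Ω]
variable [Fintype ι] [MeasurableSpace ι] [MeasurableSingletonClass ι]

/-- Key independence/stationarity identity for the label process. -/
lemma shift_law (P : Measure Ω) [IsProbabilityMeasure P]
    (g : ℕ → Ω → ι) (hgmeas : ∀ n, Measurable (g n))
    (hindep : iIndepFun g P)
    (μ : Measure ι) [IsProbabilityMeasure μ] (hlaw : ∀ n, Measure.map (g n) P = μ)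
    (i : ι) (T : Set (ℕ → ι)) (hT : MeasurableSet T) :
    P ((g 0 ⁻¹' {i}) ∩ ((fun ω n => g (n + 1) ω) ⁻¹' T))
      = μ {i} * P ((fun ω n => g n ω) ⁻¹' T) := by
  classical
  set Φ : Ω → ℕ → ι := fun ω n => g n ω with hΦdef
  set Ψ : Ω → ℕ → ι := fun ω n => g (n + 1) ω with hΨdef
  have hΦ : Measurable Φ := measurable_pi_lambda _ fun n => hgmeas n
  have hΨ : Measurable Ψ := measurable_pi_lambda _ fun n => hgmeas (n + 1)
  have hs0 : MeasurableSet (g 0 ⁻¹' {i}) := hgmeas 0 (measurableSet_all {i})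
  have hPg : ∀ (n : ℕ) (s : Set ι), P (g n ⁻¹' s) = μ s := by
    intro n s
    rw [← hlaw n, Measure.map_apply (hgmeas n) (measurableSet_all s)]
  set lam1 : Measure (ℕ → ι) := Measure.map Ψ (P.restrict (g 0 ⁻¹' {i})) with hlam1
  set lam2 : Measure (ℕ → ι) := μ {i} • Measure.map Φ P with hlam2
  have hlam1_apply : ∀ (S : Set (ℕ → ι)), MeasurableSet S →
      lam1 S = P ((g 0 ⁻¹' {i}) ∩ Ψ ⁻¹' S) := by
    intro S hS
    rw [hlam1, Measure.map_apply hΨ hS, Measure.restrict_apply (hΨ hS), Set.inter_comm]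
  have hlam2_apply : ∀ (S : Set (ℕ → ι)), MeasurableSet S →
      lam2 S = μ {i} * P (Φ ⁻¹' S) := by
    intro S hS
    rw [hlam2, Measure.smul_apply, Measure.map_apply hΦ hS, smul_eq_mul]
  have key : lam1 = lam2 := by
    haveI : IsFiniteMeasure lam1 := by
      constructor
      rw [hlam1_apply univ MeasurableSet.univ]
      exact lt_of_le_of_lt (measure_mono (Set.subset_univ _)) (measure_lt_top P _)
    refine ext_of_generate_finite (measurableCylinders (fun _ : ℕ => ι))
      (generateFrom_measurableCylinders (α := fun _ : ℕ => ι)).symm isPiSystem_measurableCylinders ?_ ?_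
    swap
    · rw [hlam1_apply univ MeasurableSet.univ, hlam2_apply univ MeasurableSet.univ]
      simp [hPg 0 {i}]
    intro t ht
    obtain ⟨s, S, hS, rfl⟩ := (mem_measurableCylinders t).1 ht
    -- decompose `S` into points
    have hSfin : S.Finite := Set.toFinite S
    have hmeas_cyl : ∀ a : (j : s) → ι, MeasurableSet (cylinder (α := fun _ : ℕ => ι) s ({a} : Set _)) := by
      intro a
      refine MeasurableSet.cylinder s ?_
      have : ({a} : Set ((j : s) → ι)) = ⋂ (j : s), (fun v => v j) ⁻¹' {a j} := by
        ext v
        simp [funext_iff]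
      rw [this]
      exact MeasurableSet.iInter fun j => (measurable_pi_apply j) (measurableSet_all _)
    have hdecomp : cylinder s S = ⋃ a ∈ hSfin.toFinset, cylinder (α := fun _ : ℕ => ι) s ({a} : Set _) := by
      ext u
      simp only [mem_cylinder, Set.mem_iUnion, Set.Finite.mem_toFinset,
        Set.mem_singleton_iff, exists_eq_right', exists_prop]
    have hdisj : (hSfin.toFinset : Set ((j : s) → ι)).Pairwise
        (Function.onFun Disjoint fun a => cylinder (α := fun _ : ℕ => ι) s ({a} : Set _)) := by
      intro a _ b _ hab
      refine Set.disjoint_left.2 fun u hua hub => hab ?_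
      rw [mem_cylinder] at hua hub
      simp only [Set.mem_singleton_iff] at hua hub
      rw [← hua, hub]
    have hsum : ∀ (lam : Measure (ℕ → ι)),
        lam (cylinder s S) = ∑ a ∈ hSfin.toFinset, lam (cylinder (α := fun _ : ℕ => ι) s ({a} : Set _)) := by
      intro lam
      rw [hdecomp]
      exact measure_biUnion_finset hdisj fun a _ => hmeas_cyl a
    rw [hsum lam1, hsum lam2]
    refine Finset.sum_congr rfl fun a _ => ?_
    -- per-point computation
    set sets : ℕ → Set ι := fun n => ⋂ (h : n ∈ s), {a ⟨n, h⟩} with hsets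
    have hΦpre : Φ ⁻¹' cylinder (α := fun _ : ℕ => ι) s ({a} : Set _) = ⋂ n ∈ s, g n ⁻¹' sets n := by
      ext ω
      simp only [Set.mem_preimage, mem_cylinder, Set.mem_singleton_iff, funext_iff,
        Set.mem_iInter, hsets, Finset.restrict_def, Subtype.forall]
      constructor
      · intro h n hn
        intro hn2
        exact h n hn2
      · intro h n hn
        exact h n hn hn
    set sets2 : ℕ → Set ι := fun n => Nat.rec ({i} : Set ι) (fun m _ => sets m) n with hsets2
    have hΨpre : (g 0 ⁻¹' {i}) ∩ Ψ ⁻¹' cylinder (α := fun _ : ℕ => ι) s ({a} : Set _)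
        = ⋂ n ∈ insert 0 (s.image Nat.succ), g n ⁻¹' sets2 n := by
      ext ω
      simp only [Set.mem_inter_iff, Set.mem_preimage, mem_cylinder, Set.mem_singleton_iff,
        funext_iff, Finset.mem_insert, Finset.mem_image, Set.mem_iInter, Subtype.forall,
        Finset.restrict_def]
      constructor
      · rintro ⟨h0, h⟩ n hn
        rcases hn with rfl | ⟨m, hm, rfl⟩
        · simpa [hsets2] using h0
        · simp only [hsets2, hsets, Set.mem_iInter, Set.mem_singleton_iff, Nat.succ_eq_add_one]
          intro hm'
          exact h m hm'
      · intro h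
        constructor
        · simpa [hsets2] using h 0 (Or.inl rfl)
        · intro m hm
          have := h (m + 1) (Or.inr ⟨m, hm, rfl⟩)
          simp only [hsets2, hsets, Set.mem_iInter, Set.mem_singleton_iff] at this
          exact this hm
    have hindep' := hindep.measure_inter_preimage_eq_mul (μ := P)
    rw [hlam1_apply _ (hmeas_cyl a), hlam2_apply _ (hmeas_cyl a), hΨpre, hΦpre,
      hindep' (insert 0 (s.image Nat.succ)) (sets := sets2)
        (fun n _ => measurableSet_all _),
      hindep' s (sets := sets) (fun n _ => measurableSet_all _)]
    have h0 : (0 : ℕ) ∉ s.image Nat.succ := by simp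
    rw [Finset.prod_insert h0, Finset.prod_image (fun m _ m' _ h => Nat.succ_injective h)]
    simp only [hPg]
    have : μ (sets2 0) = μ {i} := rfl
    rw [this]
  rw [← hlam1_apply T hT, ← hlam2_apply T hT, key]

end shift

end RdsAux13

/-- if φ₊ is not constant, then the Lebesgue–Stieltjes measure of φ₊
is a nonzero stationary measure for the inverse dynamics. -/
theorem rds_stieltjes_of_phiPlus_stationary_for_inverse
    {Ω : Type*} [MeasurableSpace Ω] (P : Measure Ω) [IsProbabilityMeasure P]
    {ι : Type*} [Fintype ι] [MeasurableSpace ι] [MeasurableSingletonClass ι]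
    (f : ι → ℝ → ℝ)
    (hf : ∀ i, StrictMono (f i) ∧ Function.Bijective (f i))
    (g : ℕ → Ω → ι) (hgmeas : ∀ n, Measurable (g n))
    (hindep : iIndepFun g P)
    (μ : Measure ι) [IsProbabilityMeasure μ] (hlaw : ∀ n, Measure.map (g n) P = μ)
    (F : ℕ → Ω → ℝ → ℝ)
    (hF0 : ∀ ω x, F 0 ω x = x)
    (hFS : ∀ n ω x, F (n + 1) ω x = f (g n ω) (F n ω x))
    (hnonconst : ∃ x y : ℝ,
      P {ω | Tendsto (fun n => F n ω x) atTop atTop} ≠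
        P {ω | Tendsto (fun n => F n ω y) atTop atTop}) :
    ∃ ν : Measure ℝ, ν ≠ 0 ∧
      (∀ x y : ℝ, x ≤ y →
        ContinuousAt (fun t : ℝ => (P {ω | Tendsto (fun n => F n ω t) atTop atTop}).toReal) x →
        ContinuousAt (fun t : ℝ => (P {ω | Tendsto (fun n => F n ω t) atTop atTop}).toReal) y →
        ν (Set.Icc x y) =
          ENNReal.ofReal ((P {ω | Tendsto (fun n => F n ω y) atTop atTop}).toReal -
            (P {ω | Tendsto (fun n => F n ω x) atTop atTop}).toReal)) ∧
      (∀ A : Set ℝ, MeasurableSet A → ν A = ∑ i, μ {i} * ν (f i '' A)) := by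
  classical
  set φ : ℝ → ℝ≥0∞ := fun t => P {ω | Tendsto (fun n => F n ω t) atTop atTop} with hφdef
  have hfmono : ∀ i, Monotone (f i) := fun i => (hf i).1.monotone
  set Φ : Ω → ℕ → ι := fun ω n => g n ω with hΦdef
  set Ψ : Ω → ℕ → ι := fun ω n => g (n + 1) ω with hΨdef
  have hΨ : Measurable Ψ := measurable_pi_lambda _ fun n => hgmeas (n + 1)
  have hFiter : ∀ ω n x, F n ω x = RdsAux13.iter f (Φ ω) n x := by
    intro ω n x
    induction n with
    | zero => rw [hF0]; rfl
    | succ n ih => rw [hFS, ih]; rfl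
  have hTset : ∀ t : ℝ, {ω | Tendsto (fun n => F n ω t) atTop atTop}
      = Φ ⁻¹' (RdsAux13.Tset f t) := by
    intro t
    ext ω
    simp only [Set.mem_setOf_eq, Set.mem_preimage, RdsAux13.Tset, Set.mem_setOf_eq]
    constructor <;> intro h <;>
      [skip; skip] <;>
      · refine h.congr fun n => ?_
        first
          | exact (hFiter ω n t)
          | exact (hFiter ω n t).symm
  have hTmeas : ∀ t : ℝ, MeasurableSet (RdsAux13.Tset f t) :=
    fun t => RdsAux13.measurableSet_Tset f hfmono t
  -- harmonicity in ℝ≥0∞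
  have harmonic : ∀ x : ℝ, φ x = ∑ i, μ {i} * φ (f i x) := by
    intro x
    have hshift : ∀ ω n, F (n + 1) ω x = RdsAux13.iter f (Ψ ω) n (f (g 0 ω) x) := by
      intro ω n
      induction n with
      | zero => rw [hFS, hF0]; rfl
      | succ n ih => rw [hFS, ih]; rfl
    have hdecomp : {ω | Tendsto (fun n => F n ω x) atTop atTop}
        = ⋃ i, ((g 0 ⁻¹' {i}) ∩ Ψ ⁻¹' RdsAux13.Tset f (f i x)) := by
      ext ω
      have h1 : Tendsto (fun n => F n ω x) atTop atTop ↔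
          Tendsto (fun n => F (n + 1) ω x) atTop atTop :=
        (Filter.tendsto_add_atTop_iff_nat (f := fun n => F n ω x) 1).symm
      have h2 : Tendsto (fun n => F (n + 1) ω x) atTop atTop ↔
          Ψ ω ∈ RdsAux13.Tset f (f (g 0 ω) x) := by
        constructor <;> intro h <;>
          · refine h.congr fun n => ?_
            first
              | exact (hshift ω n)
              | exact (hshift ω n).symm
      simp only [Set.mem_setOf_eq, Set.mem_iUnion, Set.mem_inter_iff, Set.mem_preimage,
        Set.mem_singleton_iff]
      rw [h1, h2]
      constructor
      · intro h
        exact ⟨g 0 ω, rfl, h⟩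
      · rintro ⟨i, rfl, h⟩
        exact h
    have hmeas_piece : ∀ i : ι, MeasurableSet ((g 0 ⁻¹' {i}) ∩ Ψ ⁻¹' RdsAux13.Tset f (f i x)) :=
      fun i => (hgmeas 0 (RdsAux13.measurableSet_all {i})).inter (hΨ (hTmeas _))
    have hdisj : Pairwise (Function.onFun Disjoint
        fun i => (g 0 ⁻¹' {i}) ∩ Ψ ⁻¹' RdsAux13.Tset f (f i x)) := by
      intro i j hij
      refine Set.disjoint_left.2 ?_
      rintro ω ⟨hi, -⟩ ⟨hj, -⟩
      exact hij (hi.symm.trans hj)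
    rw [hφdef]
    simp only
    rw [hdecomp, measure_iUnion hdisj hmeas_piece, tsum_fintype]
    refine Finset.sum_congr rfl fun i _ => ?_
    rw [RdsAux13.shift_law P g hgmeas hindep μ hlaw i _ (hTmeas (f i x)), hTset (f i x)]
  -- monotonicity
  have hFm : ∀ n ω, Monotone (fun x => F n ω x) := by
    intro n ω a b hab
    simp only
    rw [hFiter ω n a, hFiter ω n b]
    induction n with
    | zero => exact hab
    | succ n ih => exact hfmono _ ih
  have hφmono : ∀ ⦃a b : ℝ⦄, a ≤ b → φ a ≤ φ b := by
    intro a b hab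
    refine measure_mono fun ω hω => ?_
    exact tendsto_atTop_mono (fun n => hFm n ω hab) hω
  set φr : ℝ → ℝ := fun t => (φ t).toReal with hφrdef
  have hφrmono : Monotone φr := by
    intro a b hab
    exact ENNReal.toReal_mono (measure_ne_top P _) (hφmono hab)
  have hμfin : ∀ i : ι, μ {i} ≠ ∞ := fun i => measure_ne_top μ _
  have hφfin : ∀ t : ℝ, φ t ≠ ∞ := fun t => measure_ne_top P _
  -- real harmonicity
  have harmonicr : ∀ x : ℝ, φr x = ∑ i, (μ {i}).toReal * φr (f i x) := by
    intro x
    rw [hφrdef]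
    simp only
    rw [harmonic x, ENNReal.toReal_sum (fun i _ => ENNReal.mul_ne_top (hμfin i) (hφfin _))]
    exact Finset.sum_congr rfl fun i _ => ENNReal.toReal_mul
  set G : ℝ → ℝ := Function.rightLim φr with hGdef
  set sf : StieltjesFunction ℝ := hφrmono.stieltjesFunction with hsfdef
  have hsf_eq : ∀ t, sf t = G t := fun t => hφrmono.stieltjesFunction_eq t
  have hGmono : Monotone G := hφrmono.rightLim
  have hφr_le_G : ∀ t, φr t ≤ G t := fun t => hφrmono.le_rightLim le_rfl
  have hG_le_φr : ∀ ⦃a b : ℝ⦄, a < b → G a ≤ φr b := fun a b hab => hφrmono.rightLim_le hab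
  have hne : ∀ x : ℝ, 𝓝[>] x ≠ ⊥ := fun x => (nhdsGT_neBot x).ne
  -- G-harmonicity
  have hfi_tendsto : ∀ (i : ι) (x : ℝ), Tendsto (f i) (𝓝[>] x) (𝓝[>] (f i x)) := by
    intro i x
    have hcont : Continuous (f i) := by
      have := (StrictMono.orderIsoOfSurjective (f i) (hf i).1 (hf i).2.2).continuous
      rwa [StrictMono.coe_orderIsoOfSurjective] at this
    exact hcont.continuousWithinAt.tendsto_nhdsWithin fun y hy => (hf i).1 hy
  have harmonicG : ∀ x : ℝ, G x = ∑ i, (μ {i}).toReal * G (f i x) := by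
    intro x
    refine rightLim_eq_of_tendsto ?_
    have hterm : ∀ i : ι, Tendsto (fun y => (μ {i}).toReal * φr (f i y)) (𝓝[>] x)
        (𝓝 ((μ {i}).toReal * G (f i x))) := by
      intro i
      exact Tendsto.const_mul _ ((hφrmono.tendsto_rightLim (f i x)).comp (hfi_tendsto i x))
    have hsum : Tendsto (fun y => ∑ i, (μ {i}).toReal * φr (f i y)) (𝓝[>] x)
        (𝓝 (∑ i, (μ {i}).toReal * G (f i x))) :=
      tendsto_finset_sum _ fun i _ => hterm i
    refine hsum.congr fun y => ?_
    exact (harmonicr y).symm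
  -- continuity points
  have hG_cont : ∀ {t : ℝ}, ContinuousAt φr t → G t = φr t := by
    intro t ht
    exact rightLim_eq_of_tendsto (ht.tendsto.mono_left nhdsWithin_le_nhds)
  have hleftG : ∀ {t : ℝ}, ContinuousAt φr t → Function.leftLim G t = φr t := by
    intro t ht
    refine leftLim_eq_of_tendsto ?_
    have hl : Tendsto φr (𝓝[<] t) (𝓝 (φr t)) := ht.tendsto.mono_left nhdsWithin_le_nhds
    refine tendsto_of_tendsto_of_tendsto_of_le_of_le' hl tendsto_const_nhds ?_ ?_
    · exact eventually_mem_nhdsWithin.mono fun y hy => hφr_le_G y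
    · exact eventually_mem_nhdsWithin.mono fun y (hy : y < t) => hG_le_φr hy
  refine ⟨sf.measure, ?_, ?_, ?_⟩
  · -- nonzero
    obtain ⟨x, y, hxy⟩ := hnonconst
    have hab : ∃ a b : ℝ, a < b ∧ φr a < φr b := by
      have hne' : φr x ≠ φr y := by
        intro h
        exact hxy ((ENNReal.toReal_eq_toReal_iff' (hφfin x) (hφfin y)).1 h)
      rcases lt_trichotomy x y with h | h | h
      · exact ⟨x, y, h, lt_of_le_of_ne (hφrmono h.le) hne'⟩
      · exact absurd (by rw [h]) hne'
      · exact ⟨y, x, h, lt_of_le_of_ne (hφrmono h.le) (Ne.symm hne')⟩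
    obtain ⟨a, b, hab, hφab⟩ := hab
    intro h0
    have h1 : sf.measure (Set.Ioc (a - 1) b) = ENNReal.ofReal (sf b - sf (a - 1)) :=
      sf.measure_Ioc _ _
    have h2 : sf b - sf (a - 1) > 0 := by
      have hb : φr b ≤ sf b := by rw [hsf_eq]; exact hφr_le_G b
      have ha : sf (a - 1) ≤ φr a := by rw [hsf_eq]; exact hG_le_φr (by linarith)
      linarith
    rw [h0] at h1
    simp only [Measure.coe_zero, Pi.zero_apply] at h1
    exact absurd h1.symm (ne_of_gt (ENNReal.ofReal_pos.2 h2))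
  · -- Icc formula
    intro x y hxy hcx hcy
    have hx : ContinuousAt φr x := hcx
    have hy : ContinuousAt φr y := hcy
    rw [sf.measure_Icc x y]
    have h1 : sf y = φr y := by rw [hsf_eq]; exact hG_cont hy
    have h2 : Function.leftLim (⇑sf) x = φr x := by
      have : ⇑sf = G := funext hsf_eq
      rw [this]
      exact hleftG hx
    rw [h1, h2]
  · -- stationarity
    set e : ι → ℝ ≃o ℝ := fun i => StrictMono.orderIsoOfSurjective (f i) (hf i).1 (hf i).2.2
      with hedef
    have he : ∀ i (t : ℝ), e i t = f i t := by
      intro i t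
      rw [hedef]
      exact congrFun (StrictMono.coe_orderIsoOfSurjective (f := f i) _ _) t
    have hesymm_meas : ∀ i, Measurable ((e i).symm : ℝ → ℝ) :=
      fun i => (e i).symm.monotone.measurable
    set m : ι → Measure ℝ := fun i => Measure.map ((e i).symm : ℝ → ℝ) sf.measure with hmdef
    have himg : ∀ (i : ι) (A : Set ℝ), f i '' A = ((e i).symm : ℝ → ℝ) ⁻¹' A := by
      intro i A
      ext z
      simp only [Set.mem_image, Set.mem_preimage]
      constructor
      · rintro ⟨w, hw, rfl⟩
        rw [← he i w, OrderIso.symm_apply_apply]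
        exact hw
      · intro h
        exact ⟨(e i).symm z, h, by rw [← he i ((e i).symm z), OrderIso.apply_symm_apply]⟩
    have hνm : ∀ (i : ι) (A : Set ℝ), MeasurableSet A → sf.measure (f i '' A) = m i A := by
      intro i A hA
      rw [himg, hmdef]
      simp only
      rw [Measure.map_apply (hesymm_meas i) hA]
    have hGd : ∀ (i : ι) ⦃a b : ℝ⦄, a ≤ b → 0 ≤ G (f i b) - G (f i a) := by
      intro i a b hab
      have := hGmono (hfmono i hab)
      linarith
    have hkey : sf.measure = ∑ i, μ {i} • m i := by
      refine Measure.ext_of_Ioc _ _ fun a b hab => ?_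
      rw [Measure.finset_sum_apply]
      have hterm : ∀ i : ι, (μ {i} • m i) (Set.Ioc a b)
          = ENNReal.ofReal ((μ {i}).toReal * (G (f i b) - G (f i a))) := by
        intro i
        rw [Measure.smul_apply, smul_eq_mul, hmdef]
        simp only
        rw [Measure.map_apply (hesymm_meas i) measurableSet_Ioc]
        have hpre : ((e i).symm : ℝ → ℝ) ⁻¹' Set.Ioc a b = Set.Ioc (f i a) (f i b) := by
          rw [(e i).symm.preimage_Ioc, OrderIso.symm_symm, he, he]
        rw [hpre, sf.measure_Ioc, hsf_eq, hsf_eq,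
          ENNReal.ofReal_mul ENNReal.toReal_nonneg, ENNReal.ofReal_toReal (hμfin i)]
      have hsum : ∑ i, (μ {i} • m i) (Set.Ioc a b)
          = ENNReal.ofReal (∑ i, (μ {i}).toReal * (G (f i b) - G (f i a))) := by
        rw [ENNReal.ofReal_sum_of_nonneg
          (fun i _ => mul_nonneg ENNReal.toReal_nonneg (hGd i hab.le))]
        exact Finset.sum_congr rfl fun i _ => hterm i
      rw [hsum, sf.measure_Ioc, hsf_eq, hsf_eq]
      congr 1
      have : ∑ i, (μ {i}).toReal * (G (f i b) - G (f i a))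
          = (∑ i, (μ {i}).toReal * G (f i b)) - ∑ i, (μ {i}).toReal * G (f i a) := by
        rw [← Finset.sum_sub_distrib]
        exact Finset.sum_congr rfl fun i _ => by ring
      rw [this, ← harmonicG, ← harmonicG]
    intro A hA
    conv_lhs => rw [hkey]
    rw [Measure.finset_sum_apply]
    refine Finset.sum_congr rfl fun i _ => ?_
    rw [Measure.smul_apply, smul_eq_mul, hνm i A hA]
end

section
/- Let an RDS on ℝ be given by a finitely supported measure μ on Homeo⁺(ℝ) satisfying shiftability, and suppose there exists a probability stationary measure μ̂-stationary measure ν for the inverse dynamics. Then for the forward dynamics both φ₊ and φ₋ are strictly positive everywhere: every point tends to +∞ with positive probability and to −∞ with positive probability. Moreover the cumulative distribution function x ↦ ν((−∞, x]) equals φ₊ at its continuity points. -/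
open MeasureTheory ProbabilityTheory Filter Set
open scoped ENNReal

open scoped NNReal

set_option linter.unusedSectionVars false
set_option linter.unusedVariables false

section Aux

variable {ι : Type*} [Fintype ι] [MeasurableSpace ι] [MeasurableSingletonClass ι]

/-- apply a word (left to right) -/
def RDSwapply (f : ι → ℝ → ℝ) (w : List ι) (y : ℝ) : ℝ := w.foldl (fun z i => f i z) y

lemma RDSwapply_nil (f : ι → ℝ → ℝ) (y : ℝ) : RDSwapply f ([] : List ι) y = y := rfl

lemma RDSwapply_cons (f : ι → ℝ → ℝ) (i : ι) (w : List ι) (y : ℝ) :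
    RDSwapply f (i :: w) y = RDSwapply f w (f i y) := rfl

lemma RDSwapply_append (f : ι → ℝ → ℝ) (w₁ w₂ : List ι) (y : ℝ) :
    RDSwapply f (w₁ ++ w₂) y = RDSwapply f w₂ (RDSwapply f w₁ y) := by
  simp [RDSwapply, List.foldl_append]

lemma RDSwapply_mono {f : ι → ℝ → ℝ} (hf : ∀ i, StrictMono (f i)) (w : List ι) :
    Monotone (RDSwapply f w) := by
  induction w with
  | nil => exact monotone_id
  | cons i w ih =>
      intro y z hyz
      simpa [RDSwapply_cons] using ih ((hf i).monotone hyz)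

lemma exists_mem_pos_of_measure_pos (μ : Measure ι) {s : Set ι} (hs : 0 < μ s) :
    ∃ i ∈ s, 0 < μ {i} := by
  by_contra h
  push_neg at h
  have h0 : ∀ i ∈ s, μ {i} = 0 := fun i hi => le_antisymm (h i hi) zero_le
  have : μ s = 0 := by
    have : s = ⋃ i ∈ s, {i} := by simp
    rw [this]
    exact (measure_biUnion_null_iff (Set.to_countable s)).2 h0
  simp [this] at hs

lemma RDScont {f : ι → ℝ → ℝ} (hf : ∀ i, StrictMono (f i) ∧ Function.Bijective (f i)) (i : ι) :
    Continuous (f i) := by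
  have := OrderIso.continuous (StrictMono.orderIsoOfSurjective (f i) (hf i).1 (hf i).2.2)
  rwa [StrictMono.coe_orderIsoOfSurjective] at this

/-- words with positive-probability letters can bring a point below any target -/
lemma exists_word_down {f : ι → ℝ → ℝ} (hf : ∀ i, StrictMono (f i) ∧ Function.Bijective (f i))
    (μ : Measure ι) (hshift : ∀ x : ℝ, 0 < μ {i | f i x < x} ∧ 0 < μ {i | x < f i x})
    (b a : ℝ) :
    ∃ w : List ι, w ≠ [] ∧ (∀ i ∈ w, 0 < μ {i}) ∧ RDSwapply f w b < a := by
  have hpos : ∀ y : ℝ, ∃ i, 0 < μ {i} ∧ f i y < y := by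
    intro y
    obtain ⟨i, hi, hip⟩ := exists_mem_pos_of_measure_pos μ (hshift y).1
    exact ⟨i, hip, hi⟩
  -- main part : some (possibly empty) word works
  have main : ∃ w : List ι, (∀ i ∈ w, 0 < μ {i}) ∧ RDSwapply f w b < a := by
    by_contra hcon
    push_neg at hcon
    set R : Set ℝ := {y | ∃ w : List ι, (∀ i ∈ w, 0 < μ {i}) ∧ RDSwapply f w b = y} with hR
    have hbR : b ∈ R := ⟨[], by simp, rfl⟩
    have hRclosed : ∀ y ∈ R, ∀ i, 0 < μ {i} → f i y ∈ R := by
      rintro y ⟨w, hw, rfl⟩ i hi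
      refine ⟨w ++ [i], ?_, ?_⟩
      · intro j hj
        rcases List.mem_append.1 hj with hj | hj
        · exact hw j hj
        · rw [List.mem_singleton.1 hj]; exact hi
      · rw [RDSwapply_append]; rfl
    have hRge : ∀ y ∈ R, a ≤ y := by
      rintro y ⟨w, hw, rfl⟩
      exact le_of_not_gt (fun h => (hcon w hw).not_gt h)
    have hbdd : BddBelow R := ⟨a, fun y hy => hRge y hy⟩
    have hne : R.Nonempty := ⟨b, hbR⟩
    set c := sInf R with hc
    obtain ⟨i, hip, hic⟩ := hpos c
    have hev : ∀ᶠ y in nhds c, f i y < c :=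
      (RDScont hf i).continuousAt.eventually_lt continuousAt_const hic
    obtain ⟨δ, hδ, hball⟩ := Metric.eventually_nhds_iff.1 hev
    obtain ⟨y, hyR, hyc⟩ := (csInf_lt_iff hbdd hne).1 (by linarith : c < c + δ)
    have hcy : c ≤ y := csInf_le hbdd hyR
    have : f i y < c := hball (by rw [Real.dist_eq]; rw [abs_lt]; constructor <;> linarith)
    exact absurd (csInf_le hbdd (hRclosed y hyR i hip)) (by linarith)
  obtain ⟨w, hw, hwb⟩ := main
  obtain ⟨i, hip, hi⟩ := hpos (RDSwapply f w b)
  refine ⟨w ++ [i], by simp, ?_, ?_⟩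
  · intro j hj
    rcases List.mem_append.1 hj with hj | hj
    · exact hw j hj
    · rw [List.mem_singleton.1 hj]; exact hip
  · rw [RDSwapply_append]
    have : RDSwapply f ([i]) (RDSwapply f w b) = f i (RDSwapply f w b) := rfl
    rw [this]
    linarith

/-- words with positive-probability letters can bring a point above any target -/
lemma exists_word_up {f : ι → ℝ → ℝ} (hf : ∀ i, StrictMono (f i) ∧ Function.Bijective (f i))
    (μ : Measure ι) (hshift : ∀ x : ℝ, 0 < μ {i | f i x < x} ∧ 0 < μ {i | x < f i x})
    (b a : ℝ) :
    ∃ w : List ι, w ≠ [] ∧ (∀ i ∈ w, 0 < μ {i}) ∧ a < RDSwapply f w b := by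
  have hpos : ∀ y : ℝ, ∃ i, 0 < μ {i} ∧ y < f i y := by
    intro y
    obtain ⟨i, hi, hip⟩ := exists_mem_pos_of_measure_pos μ (hshift y).2
    exact ⟨i, hip, hi⟩
  have main : ∃ w : List ι, (∀ i ∈ w, 0 < μ {i}) ∧ a < RDSwapply f w b := by
    by_contra hcon
    push_neg at hcon
    set R : Set ℝ := {y | ∃ w : List ι, (∀ i ∈ w, 0 < μ {i}) ∧ RDSwapply f w b = y} with hR
    have hbR : b ∈ R := ⟨[], by simp, rfl⟩
    have hRclosed : ∀ y ∈ R, ∀ i, 0 < μ {i} → f i y ∈ R := by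
      rintro y ⟨w, hw, rfl⟩ i hi
      refine ⟨w ++ [i], ?_, ?_⟩
      · intro j hj
        rcases List.mem_append.1 hj with hj | hj
        · exact hw j hj
        · rw [List.mem_singleton.1 hj]; exact hi
      · rw [RDSwapply_append]; rfl
    have hRge : ∀ y ∈ R, y ≤ a := by
      rintro y ⟨w, hw, rfl⟩
      exact hcon w hw
    have hbdd : BddAbove R := ⟨a, fun y hy => hRge y hy⟩
    have hne : R.Nonempty := ⟨b, hbR⟩
    set c := sSup R with hc
    obtain ⟨i, hip, hic⟩ := hpos c
    have hev : ∀ᶠ y in nhds c, c < f i y :=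
      continuousAt_const.eventually_lt (RDScont hf i).continuousAt hic
    obtain ⟨δ, hδ, hball⟩ := Metric.eventually_nhds_iff.1 hev
    obtain ⟨y, hyR, hyc⟩ := (lt_csSup_iff hbdd hne).1 (by linarith : c - δ < c)
    have hcy : y ≤ c := le_csSup hbdd hyR
    have : c < f i y := hball (by rw [Real.dist_eq]; rw [abs_lt]; constructor <;> linarith)
    exact absurd (le_csSup hbdd (hRclosed y hyR i hip)) (by linarith)
  obtain ⟨w, hw, hwb⟩ := main
  obtain ⟨i, hip, hi⟩ := hpos (RDSwapply f w b)
  refine ⟨w ++ [i], by simp, ?_, ?_⟩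
  · intro j hj
    rcases List.mem_append.1 hj with hj | hj
    · exact hw j hj
    · rw [List.mem_singleton.1 hj]; exact hip
  · rw [RDSwapply_append]
    have : RDSwapply f ([i]) (RDSwapply f w b) = f i (RDSwapply f w b) := rfl
    rw [this]
    linarith

end Aux

section CDF

variable {ι : Type*} [Fintype ι] [MeasurableSpace ι] [MeasurableSingletonClass ι]

/-- the CDF of ν -/
noncomputable def RDSh (ν : Measure ℝ) : ℝ → ℝ := fun x => (ν (Set.Iic x)).toReal

lemma RDSh_mono (ν : Measure ℝ) [IsProbabilityMeasure ν] : Monotone (RDSh ν) := by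
  intro x y hxy
  exact ENNReal.toReal_mono (measure_ne_top ν _) (measure_mono (Set.Iic_subset_Iic.2 hxy))

lemma RDSh_nonneg (ν : Measure ℝ) (x : ℝ) : 0 ≤ RDSh ν x := ENNReal.toReal_nonneg

lemma RDSh_le_one (ν : Measure ℝ) [IsProbabilityMeasure ν] (x : ℝ) : RDSh ν x ≤ 1 := by
  have : ν (Set.Iic x) ≤ 1 := prob_le_one
  simpa [RDSh] using ENNReal.toReal_mono (by simp) this

lemma RDSh_measurable (ν : Measure ℝ) [IsProbabilityMeasure ν] : Measurable (RDSh ν) :=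
  (RDSh_mono ν).measurable

lemma RDSh_tendsto_atTop (ν : Measure ℝ) [IsProbabilityMeasure ν] :
    Tendsto (RDSh ν) atTop (nhds 1) := by
  have h1 : Tendsto (fun x => ν (Set.Iic x)) atTop (nhds (ν Set.univ)) :=
    tendsto_measure_Iic_atTop ν
  have h2 := (ENNReal.tendsto_toReal (a := ν Set.univ) (by simp)).comp h1
  exact (by simpa using h2 : Tendsto (ENNReal.toReal ∘ fun x => ν (Iic x)) atTop (nhds 1))

lemma RDSh_tendsto_atBot (ν : Measure ℝ) [IsProbabilityMeasure ν] :
    Tendsto (RDSh ν) atBot (nhds 0) := by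
  have h1 : Tendsto (fun x => ν (Set.Iic x)) atBot (nhds (ν (⋂ x : ℝ, Set.Iic x))) :=
    tendsto_measure_iInter_atBot (fun x => measurableSet_Iic.nullMeasurableSet)
      (fun x y hxy => Set.Iic_subset_Iic.2 hxy) ⟨0, measure_ne_top ν _⟩
  have hempty : (⋂ x : ℝ, Set.Iic x) = ∅ := by
    ext y
    simp only [Set.mem_iInter, Set.mem_Iic, Set.mem_empty_iff_false, iff_false, not_forall]
    exact ⟨y - 1, by push_neg; linarith⟩
  rw [hempty] at h1
  have h2 := (ENNReal.tendsto_toReal (a := (0 : ℝ≥0∞)) (by simp)).comp (by simpa using h1)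
  exact (by simpa using h2 : Tendsto (ENNReal.toReal ∘ fun x => ν (Iic x)) atBot (nhds 0))

lemma RDSimage {f : ι → ℝ → ℝ} (hf : ∀ i, StrictMono (f i) ∧ Function.Bijective (f i))
    (i : ι) (x : ℝ) : f i '' Set.Iic x = Set.Iic (f i x) := by
  have := OrderIso.image_Iic (StrictMono.orderIsoOfSurjective (f i) (hf i).1 (hf i).2.2) x
  rwa [StrictMono.coe_orderIsoOfSurjective] at this

lemma RDSnu_harmonic {f : ι → ℝ → ℝ} (hf : ∀ i, StrictMono (f i) ∧ Function.Bijective (f i))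
    (μ : Measure ι) (ν : Measure ℝ)
    (hstat : ∀ A : Set ℝ, MeasurableSet A → ν A = ∑ i, μ {i} * ν (f i '' A)) (x : ℝ) :
    ν (Set.Iic x) = ∑ i, μ {i} * ν (Set.Iic (f i x)) := by
  rw [hstat (Set.Iic x) measurableSet_Iic]
  exact Finset.sum_congr rfl fun i _ => by rw [RDSimage hf]

lemma RDSp_sum (μ : Measure ι) [IsProbabilityMeasure μ] : ∑ i, (μ {i}).toReal = 1 := by
  have h : ∑ i, μ {i} = 1 := by
    have : (Set.univ : Set ι) = ⋃ i ∈ (Finset.univ : Finset ι), {i} := by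
      simp only [Finset.mem_univ, Set.iUnion_true]
      exact (Set.iUnion_of_singleton ι).symm
    rw [← measure_univ (μ := μ), this, measure_biUnion_finset ?_ (fun i _ => measurableSet_singleton i)]
    · intro i _ j _ hij
      simp [Function.onFun, Set.disjoint_singleton, hij]
  rw [← ENNReal.toReal_sum (fun i _ => measure_ne_top μ _), h, ENNReal.toReal_one]

lemma RDSh_harmonic {f : ι → ℝ → ℝ} (hf : ∀ i, StrictMono (f i) ∧ Function.Bijective (f i))
    (μ : Measure ι) [IsProbabilityMeasure μ] (ν : Measure ℝ) [IsProbabilityMeasure ν]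
    (hstat : ∀ A : Set ℝ, MeasurableSet A → ν A = ∑ i, μ {i} * ν (f i '' A)) (x : ℝ) :
    RDSh ν x = ∑ i, (μ {i}).toReal * RDSh ν (f i x) := by
  have := RDSnu_harmonic hf μ ν hstat x
  rw [RDSh, this, ENNReal.toReal_sum (fun i _ => ?_)]
  · exact Finset.sum_congr rfl fun i _ => by rw [ENNReal.toReal_mul]; rfl
  · exact ENNReal.mul_ne_top (measure_ne_top μ _) (measure_ne_top ν _)

end CDF

section Pos

variable {ι : Type*} [Fintype ι] [MeasurableSpace ι] [MeasurableSingletonClass ι]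

lemma RDSnu_Iic_pos {f : ι → ℝ → ℝ} (hf : ∀ i, StrictMono (f i) ∧ Function.Bijective (f i))
    (μ : Measure ι) [IsProbabilityMeasure μ] (ν : Measure ℝ) [IsProbabilityMeasure ν]
    (hstat : ∀ A : Set ℝ, MeasurableSet A → ν A = ∑ i, μ {i} * ν (f i '' A))
    (hshift : ∀ x : ℝ, 0 < μ {i | f i x < x} ∧ 0 < μ {i | x < f i x}) (x : ℝ) :
    0 < ν (Set.Iic x) := by
  by_contra hx
  push_neg at hx
  have hx0 : ν (Set.Iic x) = 0 := le_antisymm hx zero_le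
  set S : Set ℝ := {y | ν (Set.Iic y) = 0} with hS
  have hxS : x ∈ S := hx0
  have hne : S.Nonempty := ⟨x, hxS⟩
  have hclosed : ∀ y ∈ S, ∀ i, 0 < μ {i} → f i y ∈ S := by
    intro y hy i hi
    have h0 : (0 : ℝ≥0∞) = ∑ j, μ {j} * ν (Set.Iic (f j y)) := by
      rw [← RDSnu_harmonic hf μ ν hstat y]; exact hy.symm
    have := (Finset.sum_eq_zero_iff.1 h0.symm) i (Finset.mem_univ i)
    rcases mul_eq_zero.1 this with h | h
    · exact absurd h hi.ne'
    · exact h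
  obtain ⟨y₀, hy₀⟩ : ∃ y₀, ν (Set.Iic y₀) ≠ 0 := by
    have h1 : Tendsto (fun y => ν (Set.Iic y)) atTop (nhds (ν Set.univ)) :=
      tendsto_measure_Iic_atTop ν
    rw [measure_univ] at h1
    have := h1.eventually_ne (by norm_num : (1 : ℝ≥0∞) ≠ 0)
    exact this.exists
  have hbdd : BddAbove S := by
    refine ⟨y₀, fun y hy => ?_⟩
    by_contra hlt
    push_neg at hlt
    exact hy₀ (measure_mono_null (Set.Iic_subset_Iic.2 hlt.le) hy)
  set c := sSup S with hc
  obtain ⟨i, hic, hip⟩ := exists_mem_pos_of_measure_pos μ (hshift c).2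
  have hev : ∀ᶠ y in nhds c, c < f i y :=
    continuousAt_const.eventually_lt (RDScont hf i).continuousAt hic
  obtain ⟨δ, hδ, hball⟩ := Metric.eventually_nhds_iff.1 hev
  obtain ⟨y, hyS, hyc⟩ := exists_lt_of_lt_csSup hne (by linarith : c - δ < c)
  have hcy : y ≤ c := le_csSup hbdd hyS
  have hfy : c < f i y := hball (by rw [Real.dist_eq, abs_lt]; constructor <;> linarith)
  exact absurd (le_csSup hbdd (hclosed y hyS i hip)) (by linarith)

lemma RDSnu_Iic_lt_one {f : ι → ℝ → ℝ} (hf : ∀ i, StrictMono (f i) ∧ Function.Bijective (f i))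
    (μ : Measure ι) [IsProbabilityMeasure μ] (ν : Measure ℝ) [IsProbabilityMeasure ν]
    (hstat : ∀ A : Set ℝ, MeasurableSet A → ν A = ∑ i, μ {i} * ν (f i '' A))
    (hshift : ∀ x : ℝ, 0 < μ {i | f i x < x} ∧ 0 < μ {i | x < f i x}) (x : ℝ) :
    RDSh ν x < 1 := by
  by_contra hx
  push_neg at hx
  have hx1 : RDSh ν x = 1 := le_antisymm (RDSh_le_one ν x) hx
  set T : Set ℝ := {y | RDSh ν y = 1} with hT
  have hne : T.Nonempty := ⟨x, hx1⟩
  have hclosed : ∀ y ∈ T, ∀ i, 0 < μ {i} → f i y ∈ T := by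
    intro y hy i hi
    have hharm := RDSh_harmonic hf μ ν hstat y
    rw [hy] at hharm
    have hsum0 : ∑ j, (μ {j}).toReal * (1 - RDSh ν (f j y)) = 0 := by
      have hps := RDSp_sum μ
      rw [Finset.sum_congr rfl (fun j _ => mul_sub ((μ {j}).toReal) 1 (RDSh ν (f j y))),
        Finset.sum_sub_distrib]
      simp only [mul_one]
      rw [hps, ← hharm]
      ring
    have hz := (Finset.sum_eq_zero_iff_of_nonneg (fun j _ =>
      mul_nonneg ENNReal.toReal_nonneg (by linarith [RDSh_le_one ν (f j y)]))).1 hsum0 i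
      (Finset.mem_univ i)
    have hpi : 0 < (μ {i}).toReal := ENNReal.toReal_pos hi.ne' (measure_ne_top μ _)
    have : (1 : ℝ) - RDSh ν (f i y) = 0 := by
      rcases mul_eq_zero.1 hz with h | h
      · exact absurd h hpi.ne'
      · exact h
    have : RDSh ν (f i y) = 1 := by linarith
    exact this
  obtain ⟨y₀, hy₀⟩ : ∃ y₀, RDSh ν y₀ < 1 := by
    have := (RDSh_tendsto_atBot ν).eventually (eventually_lt_nhds (by norm_num : (0:ℝ) < 1))
    exact this.exists
  have hbdd : BddBelow T := by
    refine ⟨y₀, fun y hy => ?_⟩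
    by_contra hlt
    push_neg at hlt
    have : RDSh ν y ≤ RDSh ν y₀ := RDSh_mono ν hlt.le
    rw [hy] at this
    linarith
  set c := sInf T with hc
  obtain ⟨i, hic, hip⟩ := exists_mem_pos_of_measure_pos μ (hshift c).1
  have hev : ∀ᶠ y in nhds c, f i y < c :=
    (RDScont hf i).continuousAt.eventually_lt continuousAt_const hic
  obtain ⟨δ, hδ, hball⟩ := Metric.eventually_nhds_iff.1 hev
  obtain ⟨y, hyT, hyc⟩ := exists_lt_of_csInf_lt hne (by linarith : c < c + δ)
  have hcy : c ≤ y := csInf_le hbdd hyT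
  have hfy : f i y < c := hball (by rw [Real.dist_eq, abs_lt]; constructor <;> linarith)
  exact absurd (csInf_le hbdd (hclosed y hyT i hip)) (by linarith)

lemma RDSh_pos {f : ι → ℝ → ℝ} (hf : ∀ i, StrictMono (f i) ∧ Function.Bijective (f i))
    (μ : Measure ι) [IsProbabilityMeasure μ] (ν : Measure ℝ) [IsProbabilityMeasure ν]
    (hstat : ∀ A : Set ℝ, MeasurableSet A → ν A = ∑ i, μ {i} * ν (f i '' A))
    (hshift : ∀ x : ℝ, 0 < μ {i | f i x < x} ∧ 0 < μ {i | x < f i x}) (x : ℝ) :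
    0 < RDSh ν x :=
  ENNReal.toReal_pos (RDSnu_Iic_pos hf μ ν hstat hshift x).ne' (measure_ne_top ν _)

end Pos

section Prob

variable {Ω : Type*} [m0 : MeasurableSpace Ω] {ι : Type*} [Fintype ι] [MeasurableSpace ι]
  [MeasurableSingletonClass ι]

/-- the natural filtration of the driving noise (strictly before time `n`) -/
def RDSfilt (g : ℕ → Ω → ι) (hg : ∀ n, Measurable (g n)) : Filtration ℕ m0 where
  seq n := ⨆ k ∈ {k : ℕ | k < n}, MeasurableSpace.comap (g k) inferInstance
  mono' := fun n m hnm => biSup_mono fun k hk => lt_of_lt_of_le hk hnm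
  le' := fun n => iSup₂_le fun k _ => (hg k).comap_le

lemma RDSgmeas_filt {g : ℕ → Ω → ι} (hg : ∀ n, Measurable (g n)) {k n : ℕ} (hk : k < n) :
    Measurable[RDSfilt g hg n] (g k) :=
  measurable_iff_comap_le.2
    (le_iSup₂ (f := fun (k : ℕ) (_ : k ∈ {k : ℕ | k < n}) =>
      MeasurableSpace.comap (g k) inferInstance) k hk)

lemma RDSstep_meas {m : MeasurableSpace Ω} {f : ι → ℝ → ℝ}
    (hf : ∀ i, StrictMono (f i) ∧ Function.Bijective (f i)) {γ : Ω → ι} {u : Ω → ℝ}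
    (hγ : Measurable[m] γ) (hu : Measurable[m] u) :
    Measurable[m] fun ω => f (γ ω) (u ω) := by
  have hT : Measurable fun p : ℝ × ι => f p.2 p.1 :=
    measurable_from_prod_countable_left fun i => (RDScont hf i).measurable
  exact hT.comp (hu.prodMk hγ)

lemma RDSF_meas {f : ι → ℝ → ℝ} (hf : ∀ i, StrictMono (f i) ∧ Function.Bijective (f i))
    {g : ℕ → Ω → ι} (hg : ∀ n, Measurable (g n)) {F : ℕ → Ω → ℝ → ℝ}
    (hF0 : ∀ ω x, F 0 ω x = x) (hFS : ∀ n ω x, F (n + 1) ω x = f (g n ω) (F n ω x)) (x : ℝ) :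
    ∀ n, Measurable fun ω => F n ω x := by
  intro n
  induction n with
  | zero => simp only [hF0]; exact measurable_const
  | succ n ih =>
      have : (fun ω => F (n + 1) ω x) = fun ω => f (g n ω) (F n ω x) :=
        funext fun ω => hFS n ω x
      rw [this]
      exact RDSstep_meas hf (hg n) ih

lemma RDSF_meas_filt {f : ι → ℝ → ℝ} (hf : ∀ i, StrictMono (f i) ∧ Function.Bijective (f i))
    {g : ℕ → Ω → ι} (hg : ∀ n, Measurable (g n)) {F : ℕ → Ω → ℝ → ℝ}
    (hF0 : ∀ ω x, F 0 ω x = x) (hFS : ∀ n ω x, F (n + 1) ω x = f (g n ω) (F n ω x)) (x : ℝ) :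
    ∀ n, Measurable[RDSfilt g hg n] fun ω => F n ω x := by
  intro n
  induction n with
  | zero => simp only [hF0]; exact measurable_const
  | succ n ih =>
      have : (fun ω => F (n + 1) ω x) = fun ω => f (g n ω) (F n ω x) :=
        funext fun ω => hFS n ω x
      rw [this]
      exact RDSstep_meas hf (RDSgmeas_filt hg n.lt_succ_self)
        (ih.mono ((RDSfilt g hg).mono n.le_succ) le_rfl)

/-- the event that the noise spells the word `w` starting at time `t` -/
def RDSevent : (ℕ → Ω → ι) → ℕ → List ι → Set Ω
  | _, _, [] => Set.univ
  | g, t, i :: w => g t ⁻¹' {i} ∩ RDSevent g (t + 1) w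

lemma RDSevent_measurableSet {g : ℕ → Ω → ι} (hg : ∀ n, Measurable (g n)) :
    ∀ (w : List ι) (t : ℕ), MeasurableSet (RDSevent g t w) := by
  intro w
  induction w with
  | nil => exact fun t => MeasurableSet.univ
  | cons i w ih =>
      exact fun t => ((hg t) (measurableSet_singleton i)).inter (ih (t + 1))

lemma RDSevent_meas_tail (g : ℕ → Ω → ι) :
    ∀ (w : List ι) (t : ℕ),
      MeasurableSet[⨆ k ∈ Set.Ici t, MeasurableSpace.comap (g k) inferInstance]
        (RDSevent g t w) := by
  intro w
  induction w with
  | nil => exact fun t => MeasurableSet.univ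
  | cons i w ih =>
      intro t
      refine MeasurableSet.inter ?_ ?_
      · exact le_iSup₂ (f := fun (k : ℕ) (_ : k ∈ Set.Ici t) =>
          MeasurableSpace.comap (g k) inferInstance) t Set.self_mem_Ici _
          ⟨{i}, measurableSet_singleton i, rfl⟩
      · have hle : (⨆ k ∈ Set.Ici (t + 1), MeasurableSpace.comap (g k) inferInstance)
            ≤ ⨆ k ∈ Set.Ici t, MeasurableSpace.comap (g k) inferInstance :=
          biSup_mono fun k (hk : t + 1 ≤ k) => (by omega : t ≤ k)
        exact hle _ (ih (t + 1))

lemma RDSevent_dyn {f : ι → ℝ → ℝ} {g : ℕ → Ω → ι} {F : ℕ → Ω → ℝ → ℝ}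
    (hFS : ∀ n ω x, F (n + 1) ω x = f (g n ω) (F n ω x)) (x : ℝ) :
    ∀ (w : List ι) (t : ℕ) (ω : Ω), ω ∈ RDSevent g t w →
      F (t + w.length) ω x = RDSwapply f w (F t ω x) := by
  intro w
  induction w with
  | nil => intro t ω _; simp [RDSwapply]
  | cons i w ih =>
      intro t ω hω
      obtain ⟨h1, h2⟩ := hω
      have hgt : g t ω = i := h1
      have : F (t + (i :: w).length) ω x = F ((t + 1) + w.length) ω x := by
        congr 1
        simp [List.length_cons]
        omega
      rw [this, ih (t + 1) ω h2, RDSwapply_cons, hFS t ω x, hgt]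

end Prob

section Prob2

variable {Ω : Type*} [m0 : MeasurableSpace Ω] {ι : Type*} [Fintype ι] [MeasurableSpace ι]
  [MeasurableSingletonClass ι]

lemma RDSindep_tail (P : Measure Ω) [IsProbabilityMeasure P] {g : ℕ → Ω → ι}
    (hg : ∀ n, Measurable (g n)) (hindep : iIndepFun g P) (t : ℕ) :
    Indep (⨆ k ∈ Set.Ici t, MeasurableSpace.comap (g k) inferInstance) (RDSfilt g hg t) P := by
  have hdis : Disjoint (Set.Ici t) {k : ℕ | k < t} := by
    rw [Set.disjoint_left]
    intro k hk hk'
    exact absurd (show k < t from hk') (not_lt.2 hk)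
  exact indep_iSup_of_disjoint (fun k => (hg k).comap_le) hindep hdis

lemma RDSindep_single (P : Measure Ω) [IsProbabilityMeasure P] {g : ℕ → Ω → ι}
    (hg : ∀ n, Measurable (g n)) (hindep : iIndepFun g P) (n : ℕ) :
    Indep (MeasurableSpace.comap (g n) inferInstance) (RDSfilt g hg n) P := by
  have hdis : Disjoint ({n} : Set ℕ) {k : ℕ | k < n} := by
    rw [Set.disjoint_left]
    intro k hk hk'
    rw [Set.mem_singleton_iff] at hk
    rw [Set.mem_setOf_eq] at hk'
    omega
  have := indep_iSup_of_disjoint (fun k => (hg k).comap_le) hindep hdis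
  rwa [iSup_singleton] at this

lemma RDSevent_prob_pos (P : Measure Ω) [IsProbabilityMeasure P] {g : ℕ → Ω → ι}
    (hg : ∀ n, Measurable (g n)) (hindep : iIndepFun g P)
    (μ : Measure ι) (hlaw : ∀ n, Measure.map (g n) P = μ) :
    ∀ (w : List ι) (t : ℕ), (∀ i ∈ w, 0 < μ {i}) → 0 < P (RDSevent g t w) := by
  intro w
  induction w with
  | nil => intro t _; simp [RDSevent]
  | cons i w ih =>
      intro t hw
      have hdis : Disjoint ({t} : Set ℕ) (Set.Ici (t + 1)) := by
        rw [Set.disjoint_left]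
        intro k hk hk'
        rw [Set.mem_singleton_iff] at hk
        rw [Set.mem_Ici] at hk'
        omega
      have hI := indep_iSup_of_disjoint (fun k => (hg k).comap_le) hindep hdis
      rw [iSup_singleton] at hI
      rw [Indep_iff] at hI
      have hsplit : P (RDSevent g t (i :: w)) = P (g t ⁻¹' {i}) * P (RDSevent g (t + 1) w) := by
        exact hI _ _ ⟨{i}, measurableSet_singleton i, rfl⟩ (RDSevent_meas_tail g w (t + 1))
      rw [RDSevent]  at hsplit ⊢
      rw [hsplit]
      have h1 : P (g t ⁻¹' {i}) = μ {i} := by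
        rw [← hlaw t, Measure.map_apply (hg t) (measurableSet_singleton i)]
      rw [h1]
      exact ENNReal.mul_pos (hw i List.mem_cons_self).ne'
        (ih (t + 1) fun j hj => hw j (List.mem_cons_of_mem i hj)).ne'

lemma RDSbnd_integrable (P : Measure Ω) [IsProbabilityMeasure P] {u : Ω → ℝ}
    (hu : AEStronglyMeasurable u P) (hb : ∀ ω, |u ω| ≤ 1) : Integrable u P :=
  Integrable.mono' (integrable_const 1) hu (ae_of_all _ fun ω => by
    simpa [Real.norm_eq_abs] using hb ω)

end Prob2

section Mart

variable {Ω : Type*} [m0 : MeasurableSpace Ω] {ι : Type*} [Fintype ι] [MeasurableSpace ι]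
  [MeasurableSingletonClass ι]

lemma RDSabs_h_le_one (ν : Measure ℝ) [IsProbabilityMeasure ν] (y : ℝ) : |RDSh ν y| ≤ 1 :=
  abs_le.2 ⟨by linarith [RDSh_nonneg ν y], RDSh_le_one ν y⟩

lemma RDSmartingale (P : Measure Ω) [IsProbabilityMeasure P] {f : ι → ℝ → ℝ}
    (hf : ∀ i, StrictMono (f i) ∧ Function.Bijective (f i)) {g : ℕ → Ω → ι}
    (hg : ∀ n, Measurable (g n)) (hindep : iIndepFun g P)
    (μ : Measure ι) [IsProbabilityMeasure μ] (hlaw : ∀ n, Measure.map (g n) P = μ)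
    {F : ℕ → Ω → ℝ → ℝ} (hF0 : ∀ ω x, F 0 ω x = x)
    (hFS : ∀ n ω x, F (n + 1) ω x = f (g n ω) (F n ω x))
    (ν : Measure ℝ) [IsProbabilityMeasure ν]
    (hstat : ∀ A : Set ℝ, MeasurableSet A → ν A = ∑ i, μ {i} * ν (f i '' A)) (x : ℝ) :
    Martingale (fun n ω => RDSh ν (F n ω x)) (RDSfilt g hg) P := by
  refine martingale_nat (fun n => ?_) (fun n => ?_) (fun n => ?_)
  · exact ((RDSh_measurable ν).comp (RDSF_meas_filt hf hg hF0 hFS x n)).stronglyMeasurable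
  · exact RDSbnd_integrable P
      ((RDSh_measurable ν).comp (RDSF_meas hf hg hF0 hFS x n)).aestronglyMeasurable
      (fun ω => RDSabs_h_le_one ν _)
  · -- one-step martingale property
    set c : ι → Ω → ℝ :=
      fun i ω => RDSh ν (f i (F n ω x)) * Set.indicator (g n ⁻¹' {i}) (1 : Ω → ℝ) ω with hc
    have hχmeas : ∀ i : ι, Measurable (Set.indicator (g n ⁻¹' {i}) (1 : Ω → ℝ)) :=
      fun i => measurable_const.indicator ((hg n) (measurableSet_singleton i))
    have hχbd : ∀ (i : ι) (ω : Ω), |Set.indicator (g n ⁻¹' {i}) (1 : Ω → ℝ) ω| ≤ 1 := by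
      intro i ω
      by_cases hω : ω ∈ g n ⁻¹' {i} <;> simp [Set.indicator_of_mem, Set.indicator_of_notMem, hω]
    have hχint : ∀ i : ι, Integrable (Set.indicator (g n ⁻¹' {i}) (1 : Ω → ℝ)) P :=
      fun i => RDSbnd_integrable P (hχmeas i).aestronglyMeasurable (hχbd i)
    have hcmeasF : ∀ i : ι, Measurable[RDSfilt g hg n] fun ω => RDSh ν (f i (F n ω x)) :=
      fun i => (RDSh_measurable ν).comp
        ((RDScont hf i).measurable.comp (RDSF_meas_filt hf hg hF0 hFS x n))
    have hcmeas : ∀ i : ι, Measurable fun ω => RDSh ν (f i (F n ω x)) :=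
      fun i => (RDSh_measurable ν).comp
        ((RDScont hf i).measurable.comp (RDSF_meas hf hg hF0 hFS x n))
    have hcint : ∀ i ∈ Finset.univ, Integrable (c i) P := by
      intro i _
      refine RDSbnd_integrable P ((hcmeas i).mul (hχmeas i)).aestronglyMeasurable fun ω => ?_
      rw [hc, abs_mul]
      calc |RDSh ν (f i (F n ω x))| * |Set.indicator (g n ⁻¹' {i}) (1 : Ω → ℝ) ω|
          ≤ 1 * 1 := mul_le_mul (RDSabs_h_le_one ν _) (hχbd i ω) (abs_nonneg _) zero_le_one
        _ = 1 := by ring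
    have hrew : (fun ω => RDSh ν (F (n + 1) ω x)) = ∑ i, c i := by
      funext ω
      rw [Finset.sum_apply, hFS n ω x]
      rw [Finset.sum_eq_single (g n ω)]
      · rw [hc]
        simp only [Set.indicator_of_mem (by rfl : ω ∈ g n ⁻¹' {g n ω})]
        simp
      · intro j _ hj
        rw [hc]
        simp only []
        rw [Set.indicator_of_notMem, mul_zero]
        simp only [Set.mem_preimage, Set.mem_singleton_iff]
        exact fun h => hj h.symm
      · intro h; exact absurd (Finset.mem_univ _) h
    have h1 : P[fun ω => RDSh ν (F (n + 1) ω x)|RDSfilt g hg n] =ᵐ[P] ∑ i, P[c i|RDSfilt g hg n] := by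
      rw [hrew]
      exact condExp_finset_sum hcint _
    have h2 : ∀ i : ι, P[c i|RDSfilt g hg n] =ᵐ[P]
        fun ω => RDSh ν (f i (F n ω x)) * (μ {i}).toReal := by
      intro i
      have hpull := condExp_mul_of_stronglyMeasurable_left (μ := P) (m := RDSfilt g hg n)
        (hcmeasF i).stronglyMeasurable (hcint i (Finset.mem_univ i)) (hχint i)
      have hsm : StronglyMeasurable[MeasurableSpace.comap (g n) inferInstance]
          (Set.indicator (g n ⁻¹' {i}) (1 : Ω → ℝ)) :=
        stronglyMeasurable_one.indicator ⟨{i}, measurableSet_singleton i, rfl⟩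
      have hcond := condExp_indep_eq (μ := P) ((hg n).comap_le) ((RDSfilt g hg).le n) hsm
        (RDSindep_single P hg hindep n)
      have hval : (∫ ω, Set.indicator (g n ⁻¹' {i}) (1 : Ω → ℝ) ω ∂P) = (μ {i}).toReal := by
        have hone : ((g n ⁻¹' {i}).indicator (1 : Ω → ℝ))
            = (g n ⁻¹' {i}).indicator (fun _ => (1 : ℝ)) := rfl
        rw [hone, integral_indicator_const (1 : ℝ) ((hg n) (measurableSet_singleton i)),
          smul_eq_mul, mul_one, ← hlaw n, Measure.map_apply (hg n) (measurableSet_singleton i), measureReal_def]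
      refine hpull.trans ?_
      have := EventuallyEq.mul
        (EventuallyEq.refl (ae P) (fun ω => RDSh ν (f i (F n ω x)))) hcond
      refine this.trans (Filter.EventuallyEq.of_eq ?_)
      funext ω
      show RDSh ν (f i (F n ω x)) * (∫ ω, Set.indicator (g n ⁻¹' {i}) (1 : Ω → ℝ) ω ∂P)
          = RDSh ν (f i (F n ω x)) * (μ {i}).toReal
      rw [hval]
    have h3 : (∑ i, P[c i|RDSfilt g hg n] : Ω → ℝ) =ᵐ[P]
        fun ω => ∑ i, RDSh ν (f i (F n ω x)) * (μ {i}).toReal := by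
      have := eventuallyEq_sum (s := (Finset.univ : Finset ι)) (fun i _ => h2 i)
      refine this.trans ?_
      refine Filter.EventuallyEq.of_eq ?_
      funext ω
      rw [Finset.sum_apply]
    have h4 : (fun ω => ∑ i, RDSh ν (f i (F n ω x)) * (μ {i}).toReal)
        = fun ω => RDSh ν (F n ω x) := by
      funext ω
      rw [RDSh_harmonic hf μ ν hstat (F n ω x)]
      exact Finset.sum_congr rfl fun i _ => mul_comm _ _
    exact (((h1.trans h3).trans (Filter.EventuallyEq.of_eq h4))).symm

end Mart

section Core

variable {Ω : Type*} [m0 : MeasurableSpace Ω] {ι : Type*} [Fintype ι] [MeasurableSpace ι]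
  [MeasurableSingletonClass ι]

lemma RDSevent_meas_filt {g : ℕ → Ω → ι} (hg : ∀ n, Measurable (g n)) :
    ∀ (w : List ι) (t : ℕ), MeasurableSet[RDSfilt g hg (t + w.length)] (RDSevent g t w) := by
  intro w
  induction w with
  | nil => exact fun t => MeasurableSet.univ
  | cons i w ih =>
      intro t
      refine MeasurableSet.inter ?_ ?_
      · exact (RDSgmeas_filt hg (by simp [List.length_cons] : t < t + (i :: w).length))
          (measurableSet_singleton i)
      · have harith : (t + 1) + w.length = t + (i :: w).length := by
          simp [List.length_cons]; omega
        have := ih (t + 1)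
        rw [harith] at this
        exact this

lemma RDSevent_prob (P : Measure Ω) [IsProbabilityMeasure P] {g : ℕ → Ω → ι}
    (hg : ∀ n, Measurable (g n)) (hindep : iIndepFun g P)
    (μ : Measure ι) (hlaw : ∀ n, Measure.map (g n) P = μ) :
    ∀ (w : List ι) (t : ℕ), P (RDSevent g t w) = (w.map fun i => μ {i}).prod := by
  intro w
  induction w with
  | nil => intro t; simp [RDSevent]
  | cons i w ih =>
      intro t
      have hdis : Disjoint ({t} : Set ℕ) (Set.Ici (t + 1)) := by
        rw [Set.disjoint_left]
        intro k hk hk'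
        rw [Set.mem_singleton_iff] at hk
        rw [Set.mem_Ici] at hk'
        omega
      have hI := indep_iSup_of_disjoint (fun k => (hg k).comap_le) hindep hdis
      rw [iSup_singleton] at hI
      rw [Indep_iff] at hI
      have hsplit : P (RDSevent g t (i :: w)) = P (g t ⁻¹' {i}) * P (RDSevent g (t + 1) w) :=
        hI _ _ ⟨{i}, measurableSet_singleton i, rfl⟩ (RDSevent_meas_tail g w (t + 1))
      have h1 : P (g t ⁻¹' {i}) = μ {i} := by
        rw [← hlaw t, Measure.map_apply (hg t) (measurableSet_singleton i)]
      rw [hsplit, h1, ih (t + 1), List.map_cons, List.prod_cons]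

/-- Core lemma: if the trajectory visits `[a, b]` along an arithmetic progression
infinitely often, then the property obtained by applying the word `w` from `[a, b]`
holds infinitely often. -/
lemma RDScore (P : Measure Ω) [IsProbabilityMeasure P] {f : ι → ℝ → ℝ}
    (hf : ∀ i, StrictMono (f i) ∧ Function.Bijective (f i)) {g : ℕ → Ω → ι}
    (hg : ∀ n, Measurable (g n)) (hindep : iIndepFun g P)
    (μ : Measure ι) [IsProbabilityMeasure μ] (hlaw : ∀ n, Measure.map (g n) P = μ)
    {F : ℕ → Ω → ℝ → ℝ} (hF0 : ∀ ω x, F 0 ω x = x)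
    (hFS : ∀ n ω x, F (n + 1) ω x = f (g n ω) (F n ω x)) (x : ℝ)
    (w : List ι) (hwpos : ∀ i ∈ w, 0 < μ {i}) (hwlen : 0 < w.length)
    (a b : ℝ) (Q : ℝ → Prop) (hQ : ∀ y, a ≤ y → y ≤ b → Q (RDSwapply f w y)) (r : ℕ) :
    ∀ᵐ ω ∂P, (∃ᶠ k in atTop, F (k * w.length + r) ω x ∈ Set.Icc a b) →
      ∃ᶠ n in atTop, Q (F n ω x) := by
  classical
  set m := w.length with hm
  set ℋ : Filtration ℕ m0 :=
    { seq := fun k => RDSfilt g hg (k * m + r)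
      mono' := fun k k' hk => (RDSfilt g hg).mono
        (Nat.add_le_add_right (Nat.mul_le_mul_right m hk) r)
      le' := fun k => (RDSfilt g hg).le _ } with hℋ
  set V : ℕ → Set Ω := fun k => (fun ω => F (k * m + r) ω x) ⁻¹' (Set.Icc a b) with hV
  set D : ℕ → Set Ω := fun k => V k ∩ RDSevent g (k * m + r) w with hD
  set s : ℕ → Set Ω := fun n => match n with
    | 0 => (∅ : Set Ω)
    | (k+1) => D k
  have hVmeas : ∀ k, MeasurableSet[RDSfilt g hg (k * m + r)] (V k) :=
    fun k => (RDSF_meas_filt hf hg hF0 hFS x _) measurableSet_Icc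
  have hsm : ∀ n, MeasurableSet[ℋ n] (s n) := by
    intro n
    cases n with
    | zero => exact @MeasurableSet.empty Ω (ℋ 0)
    | succ k =>
        have h2 : MeasurableSet[RDSfilt g hg ((k * m + r) + m)] (RDSevent g (k * m + r) w) :=
          RDSevent_meas_filt hg w _
        have harith : (k + 1) * m + r = (k * m + r) + m := by ring
        show MeasurableSet[RDSfilt g hg ((k + 1) * m + r)] (D k)
        rw [harith]
        exact (((RDSfilt g hg).mono (Nat.le_add_right _ _)) _ (hVmeas k)).inter h2
  set δ : ℝ := ((w.map fun i => μ {i}).prod).toReal with hδdef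
  have hδpos : 0 < δ := by
    have h1 : P (RDSevent g 0 w) = (w.map fun i => μ {i}).prod :=
      RDSevent_prob P hg hindep μ hlaw w 0
    have h2 : 0 < P (RDSevent g 0 w) := RDSevent_prob_pos P hg hindep μ hlaw w 0 hwpos
    have h3 : P (RDSevent g 0 w) ≤ 1 := prob_le_one
    rw [h1] at h2 h3
    exact ENNReal.toReal_pos h2.ne' (lt_of_le_of_lt h3 ENNReal.one_lt_top).ne
  -- conditional expectation of the indicator of `s (k+1)` given `ℋ k`
  have hce : ∀ k : ℕ, P[(s (k + 1)).indicator (1 : Ω → ℝ)|ℋ k] =ᵐ[P]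
      fun ω => Set.indicator (V k) (1 : Ω → ℝ) ω * δ := by
    intro k
    set t := k * m + r with ht
    have hdec : (s (k + 1)).indicator (1 : Ω → ℝ) =
        (Set.indicator (V k) (1 : Ω → ℝ)) *
          (Set.indicator (RDSevent g t w) (1 : Ω → ℝ)) := by
      rw [show s (k + 1) = V k ∩ RDSevent g t w from rfl, Set.inter_indicator_one]
    have hχ1meas : Measurable (Set.indicator (V k) (1 : Ω → ℝ)) :=
      measurable_const.indicator (((RDSfilt g hg).le _) _ (hVmeas k))
    have hχ2meas : Measurable (Set.indicator (RDSevent g t w) (1 : Ω → ℝ)) :=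
      measurable_const.indicator (RDSevent_measurableSet hg w t)
    have hbd : ∀ (u : Set Ω) (ω : Ω), |Set.indicator u (1 : Ω → ℝ) ω| ≤ 1 := by
      intro u ω
      by_cases hω : ω ∈ u <;> simp [Set.indicator_of_mem, Set.indicator_of_notMem, hω]
    have hχ2int : Integrable (Set.indicator (RDSevent g t w) (1 : Ω → ℝ)) P :=
      RDSbnd_integrable P hχ2meas.aestronglyMeasurable (hbd _)
    have hprodint : Integrable ((fun ω => Set.indicator (V k) (1 : Ω → ℝ) ω) *
        (fun ω => Set.indicator (RDSevent g t w) (1 : Ω → ℝ) ω)) P := by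
      refine RDSbnd_integrable P (hχ1meas.mul hχ2meas).aestronglyMeasurable fun ω => ?_
      rw [Pi.mul_apply, abs_mul]
      calc |Set.indicator (V k) (1 : Ω → ℝ) ω| * |Set.indicator (RDSevent g t w) (1 : Ω → ℝ) ω|
          ≤ 1 * 1 := mul_le_mul (hbd _ _) (hbd _ _) (abs_nonneg _) zero_le_one
        _ = 1 := by ring
    have hpull := condExp_mul_of_stronglyMeasurable_left (μ := P) (m := ℋ k)
      ((stronglyMeasurable_one.indicator (hVmeas k) :
        StronglyMeasurable[ℋ k] (Set.indicator (V k) (1 : Ω → ℝ)))) hprodint hχ2int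
    have hsm2 : StronglyMeasurable[⨆ k' ∈ Set.Ici t, MeasurableSpace.comap (g k') inferInstance]
        (Set.indicator (RDSevent g t w) (1 : Ω → ℝ)) :=
      stronglyMeasurable_one.indicator (RDSevent_meas_tail g w t)
    have hcond := condExp_indep_eq (μ := P)
      (iSup₂_le fun k' (_ : k' ∈ Set.Ici t) => (hg k').comap_le) ((RDSfilt g hg).le t) hsm2
      (RDSindep_tail P hg hindep t)
    have hval : (∫ ω, Set.indicator (RDSevent g t w) (1 : Ω → ℝ) ω ∂P) = δ := by
      have hone : ((RDSevent g t w).indicator (1 : Ω → ℝ))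
          = (RDSevent g t w).indicator (fun _ => (1 : ℝ)) := rfl
      rw [hone, integral_indicator_const (1 : ℝ) (RDSevent_measurableSet hg w t),
        smul_eq_mul, mul_one, measureReal_def, RDSevent_prob P hg hindep μ hlaw w t]
    rw [hdec]
    refine hpull.trans ?_
    have := EventuallyEq.mul
      (EventuallyEq.refl (ae P) (Set.indicator (V k) (1 : Ω → ℝ))) hcond
    refine this.trans (Filter.EventuallyEq.of_eq ?_)
    funext ω
    show Set.indicator (V k) (1 : Ω → ℝ) ω *
        (∫ ω, Set.indicator (RDSevent g t w) (1 : Ω → ℝ) ω ∂P) = _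
    rw [hval]
  have hBC := ae_mem_limsup_atTop_iff P hsm
  filter_upwards [hBC, ae_all_iff.2 hce] with ω hω hcondω
  intro hfreq
  -- visits happen infinitely often, so the conditional sums tend to infinity
  set sV : ℕ → Set Ω := fun n => match n with
    | 0 => (∅ : Set Ω)
    | (k+1) => V k
  have hωlims : ω ∈ limsup sV atTop := by
    rw [mem_limsup_iff_frequently_mem]
    rw [frequently_atTop] at hfreq ⊢
    intro N
    obtain ⟨k, hk, hkmem⟩ := hfreq N
    exact ⟨k + 1, by omega, hkmem⟩
  have htendsV : Tendsto (fun n => ∑ k ∈ Finset.range n,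
      (sV (k + 1)).indicator (1 : Ω → ℝ) ω) atTop atTop := by
    have := Set.limsup_eq_tendsto_sum_indicator_atTop (zero_lt_one (α := ℝ)) sV
    rw [this] at hωlims
    have h' := (tendsto_add_atTop_iff_nat 1).2 hωlims
    refine h'.congr fun n => ?_
    rw [Finset.sum_range_succ']
    show _ + (∅ : Set Ω).indicator _ ω = _
    simp only [Set.indicator_empty, add_zero, Pi.one_def]
  have htends : Tendsto (fun n => ∑ k ∈ Finset.range n,
      (P[(s (k + 1)).indicator (1 : Ω → ℝ)|ℋ k]) ω) atTop atTop := by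
    have heq : (fun n => ∑ k ∈ Finset.range n, (P[(s (k + 1)).indicator (1 : Ω → ℝ)|ℋ k]) ω)
        = fun n => (∑ k ∈ Finset.range n, (sV (k + 1)).indicator (1 : Ω → ℝ) ω) * δ := by
      funext n
      rw [Finset.sum_mul]
      exact Finset.sum_congr rfl fun k _ => by rw [hcondω k]
    rw [heq]
    exact Tendsto.atTop_mul_const hδpos htendsV
  have hωlim : ω ∈ limsup s atTop := hω.2 htends
  rw [mem_limsup_iff_frequently_mem, frequently_atTop] at hωlim
  rw [frequently_atTop]
  intro N
  obtain ⟨n, hn, hmem⟩ := hωlim (N + 1)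
  cases n with
  | zero => omega
  | succ k =>
    obtain ⟨hVk, hEk⟩ := hmem
    refine ⟨k * m + r + m, ?_, ?_⟩
    · have h1k : 1 * (k + 1) ≤ m * (k + 1) := Nat.mul_le_mul_right (k + 1) hwlen
      have : k + 1 ≤ k * m + r + m := by nlinarith
      omega
    · have hdyn := RDSevent_dyn hFS x w (k * m + r) ω hEk
      rw [← hm] at hdyn
      rw [hdyn]
      exact hQ _ hVk.1 hVk.2

end Core

section Conv

variable {Ω : Type*} [m0 : MeasurableSpace Ω] {ι : Type*} [Fintype ι] [MeasurableSpace ι]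
  [MeasurableSingletonClass ι]

lemma RDSconv (P : Measure Ω) [IsProbabilityMeasure P] {f : ι → ℝ → ℝ}
    (hf : ∀ i, StrictMono (f i) ∧ Function.Bijective (f i)) {g : ℕ → Ω → ι}
    (hg : ∀ n, Measurable (g n)) (hindep : iIndepFun g P)
    (μ : Measure ι) [IsProbabilityMeasure μ] (hlaw : ∀ n, Measure.map (g n) P = μ)
    {F : ℕ → Ω → ℝ → ℝ} (hF0 : ∀ ω x, F 0 ω x = x)
    (hFS : ∀ n ω x, F (n + 1) ω x = f (g n ω) (F n ω x))
    (ν : Measure ℝ) [IsProbabilityMeasure ν]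
    (hstat : ∀ A : Set ℝ, MeasurableSet A → ν A = ∑ i, μ {i} * ν (f i '' A)) (x : ℝ) :
    ∀ᵐ ω ∂P, ∃ c : ℝ, Tendsto (fun n => RDSh ν (F n ω x)) atTop (nhds c) := by
  have hmart := RDSmartingale P hf hg hindep μ hlaw hF0 hFS ν hstat x
  have hbdd : ∀ n, eLpNorm (fun ω => RDSh ν (F n ω x)) 1 P ≤ ((1 : ℝ≥0) : ℝ≥0∞) := by
    intro n
    refine le_trans (eLpNorm_le_of_ae_bound (C := 1)
      (ae_of_all _ fun ω => by simpa [Real.norm_eq_abs] using RDSabs_h_le_one ν (F n ω x))) ?_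
    simp
  filter_upwards [hmart.submartingale.ae_tendsto_limitProcess hbdd] with ω hω
  exact ⟨_, hω⟩

lemma RDSle_of_freq {u : ℕ → ℝ} {c A : ℝ} (hc : Tendsto u atTop (nhds c))
    (h : ∃ᶠ n in atTop, u n ≤ A) : c ≤ A := by
  have h2 : ∃ᶠ y in nhds c, y ≤ A := hc.frequently h
  have h3 : c ∈ closure (Set.Iic A) := mem_closure_iff_frequently.2 h2
  rwa [IsClosed.closure_eq isClosed_Iic] at h3

lemma RDSge_of_freq {u : ℕ → ℝ} {c A : ℝ} (hc : Tendsto u atTop (nhds c))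
    (h : ∃ᶠ n in atTop, A ≤ u n) : A ≤ c := by
  have h2 : ∃ᶠ y in nhds c, A ≤ y := hc.frequently h
  have h3 : c ∈ closure (Set.Ici A) := mem_closure_iff_frequently.2 h2
  rwa [IsClosed.closure_eq isClosed_Ici] at h3

/-- pigeonhole along residues -/
lemma RDSpigeon {p : ℕ → Prop} {m : ℕ} (hm : 0 < m) (hp : ∃ᶠ n in atTop, p n) :
    ∃ r, ∃ᶠ k in atTop, p (k * m + r) := by
  by_contra hcon
  push_neg at hcon
  rw [Nat.frequently_atTop_iff_infinite] at hp
  have hfin : ∀ r, {k : ℕ | p (k * m + r)}.Finite := by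
    intro r
    exact Set.not_infinite.1 fun hinf => not_frequently.2 (hcon r) (Nat.frequently_atTop_iff_infinite.mpr hinf)
  refine hp ?_
  have hsub : {n : ℕ | p n} ⊆ ⋃ r ∈ Finset.range m, (fun k => k * m + r) '' {k | p (k * m + r)} := by
    intro n hn
    have hnm : n / m * m + n % m = n := by
      calc n / m * m + n % m = m * (n / m) + n % m := by rw [Nat.mul_comm]
        _ = n := Nat.div_add_mod n m
    refine Set.mem_biUnion (Finset.mem_range.2 (Nat.mod_lt n hm)) ?_
    refine ⟨n / m, ?_, hnm⟩
    show p (n / m * m + n % m)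
    rw [hnm]
    exact hn
  exact ((Set.Finite.biUnion (Finset.range m).finite_toSet
    (fun r _ => (hfin r).image _)).subset hsub)

end Conv

section Dich

variable {Ω : Type*} [m0 : MeasurableSpace Ω] {ι : Type*} [Fintype ι] [MeasurableSpace ι]
  [MeasurableSingletonClass ι]

lemma RDSdichotomy (P : Measure Ω) [IsProbabilityMeasure P] {f : ι → ℝ → ℝ}
    (hf : ∀ i, StrictMono (f i) ∧ Function.Bijective (f i)) {g : ℕ → Ω → ι}
    (hg : ∀ n, Measurable (g n)) (hindep : iIndepFun g P)
    (μ : Measure ι) [IsProbabilityMeasure μ] (hlaw : ∀ n, Measure.map (g n) P = μ)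
    {F : ℕ → Ω → ℝ → ℝ} (hF0 : ∀ ω x, F 0 ω x = x)
    (hFS : ∀ n ω x, F (n + 1) ω x = f (g n ω) (F n ω x))
    (hshift : ∀ x : ℝ, 0 < μ {i | f i x < x} ∧ 0 < μ {i | x < f i x})
    (ν : Measure ℝ) [IsProbabilityMeasure ν]
    (hstat : ∀ A : Set ℝ, MeasurableSet A → ν A = ∑ i, μ {i} * ν (f i '' A)) (x : ℝ) :
    ∀ᵐ ω ∂P, Tendsto (fun n => F n ω x) atTop atTop ∨
      Tendsto (fun n => F n ω x) atTop atBot := by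
  obtain ⟨astar, hastar⟩ : ∃ a : ℝ, RDSh ν a < 1/2 :=
    ((RDSh_tendsto_atBot ν).eventually
      (eventually_lt_nhds (by norm_num : (0:ℝ) < 1/2))).exists
  obtain ⟨bstar, hbstar⟩ : ∃ b : ℝ, 1/2 < RDSh ν b :=
    ((RDSh_tendsto_atTop ν).eventually
      (eventually_gt_nhds (by norm_num : (1/2:ℝ) < 1))).exists
  have hwdn' : ∀ q : ℚ, ∃ w : List ι, w ≠ [] ∧ (∀ i ∈ w, 0 < μ {i}) ∧
      RDSwapply f w (q : ℝ) < astar := fun q => exists_word_down hf μ hshift q astar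
  have hwup' : ∀ q : ℚ, ∃ w : List ι, w ≠ [] ∧ (∀ i ∈ w, 0 < μ {i}) ∧
      bstar < RDSwapply f w (q : ℝ) := fun q => exists_word_up hf μ hshift q bstar
  choose wdn hwdn1 hwdn2 hwdn3 using hwdn'
  choose wup hwup1 hwup2 hwup3 using hwup'
  have hdown : ∀ᵐ ω ∂P, ∀ (q1 q2 : ℚ) (r : ℕ),
      (∃ᶠ k in atTop, F (k * (wdn q2).length + r) ω x ∈ Set.Icc (q1 : ℝ) (q2 : ℝ)) →
        ∃ᶠ n in atTop, F n ω x ≤ astar := by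
    rw [ae_all_iff]
    intro q1
    rw [ae_all_iff]
    intro q2
    rw [ae_all_iff]
    intro r
    refine RDScore P hf hg hindep μ hlaw hF0 hFS x (wdn q2) (hwdn2 q2)
      (List.length_pos_iff.2 (hwdn1 q2)) (q1 : ℝ) (q2 : ℝ) (fun y => y ≤ astar)
      (fun y hy1 hy2 => ?_) r
    calc RDSwapply f (wdn q2) y ≤ RDSwapply f (wdn q2) (q2 : ℝ) :=
          RDSwapply_mono (fun i => (hf i).1) (wdn q2) hy2
      _ ≤ astar := (hwdn3 q2).le
  have hup : ∀ᵐ ω ∂P, ∀ (q1 q2 : ℚ) (r : ℕ),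
      (∃ᶠ k in atTop, F (k * (wup q1).length + r) ω x ∈ Set.Icc (q1 : ℝ) (q2 : ℝ)) →
        ∃ᶠ n in atTop, bstar ≤ F n ω x := by
    rw [ae_all_iff]
    intro q1
    rw [ae_all_iff]
    intro q2
    rw [ae_all_iff]
    intro r
    refine RDScore P hf hg hindep μ hlaw hF0 hFS x (wup q1) (hwup2 q1)
      (List.length_pos_iff.2 (hwup1 q1)) (q1 : ℝ) (q2 : ℝ) (fun y => bstar ≤ y)
      (fun y hy1 hy2 => ?_) r
    calc bstar ≤ RDSwapply f (wup q1) (q1 : ℝ) := (hwup3 q1).le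
      _ ≤ RDSwapply f (wup q1) y := RDSwapply_mono (fun i => (hf i).1) (wup q1) hy1
  have hconv := RDSconv P hf hg hindep μ hlaw hF0 hFS ν hstat x
  filter_upwards [hconv, hdown, hup] with ω hcw hd hu
  obtain ⟨c, hc⟩ := hcw
  have hprim : ¬((∃ᶠ n in atTop, F n ω x ≤ astar) ∧ (∃ᶠ n in atTop, bstar ≤ F n ω x)) := by
    rintro ⟨h1, h2⟩
    have hc1 : c ≤ RDSh ν astar :=
      RDSle_of_freq hc (h1.mono fun n hn => RDSh_mono ν hn)
    have hc2 : RDSh ν bstar ≤ c :=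
      RDSge_of_freq hc (h2.mono fun n hn => RDSh_mono ν hn)
    linarith
  have hnovisit : ∀ q1 q2 : ℚ, ¬ (∃ᶠ n in atTop, F n ω x ∈ Set.Icc (q1 : ℝ) (q2 : ℝ)) := by
    intro q1 q2 hfreq
    refine hprim ⟨?_, ?_⟩
    · obtain ⟨r, hr⟩ := RDSpigeon (List.length_pos_iff.2 (hwdn1 q2)) hfreq
      exact hd q1 q2 r hr
    · obtain ⟨r, hr⟩ := RDSpigeon (List.length_pos_iff.2 (hwup1 q1)) hfreq
      exact hu q1 q2 r hr
  rcases not_and_or.1 hprim with hA | hB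
  · left
    rw [not_frequently] at hA
    rw [tendsto_atTop]
    intro C
    obtain ⟨q1, hq1⟩ := exists_rat_lt astar
    obtain ⟨q2, hq2⟩ := exists_rat_gt (max astar C)
    have hev := hnovisit q1 q2
    rw [not_frequently] at hev
    filter_upwards [hA, hev] with n hn1 hn2
    push_neg at hn1
    have h1 : ¬((q1 : ℝ) ≤ F n ω x ∧ F n ω x ≤ (q2 : ℝ)) := by
      intro hmem
      exact hn2 ⟨hmem.1, hmem.2⟩
    push_neg at h1
    have hCmax : C ≤ max astar C := le_max_right _ _
    by_cases hle : (q1 : ℝ) ≤ F n ω x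
    · have := h1 hle
      linarith
    · push_neg at hle
      linarith
  · right
    rw [not_frequently] at hB
    rw [tendsto_atBot]
    intro C
    obtain ⟨q2, hq2⟩ := exists_rat_gt bstar
    obtain ⟨q1, hq1⟩ := exists_rat_lt (min bstar C)
    have hev := hnovisit q1 q2
    rw [not_frequently] at hev
    filter_upwards [hB, hev] with n hn1 hn2
    push_neg at hn1
    have h1 : ¬((q1 : ℝ) ≤ F n ω x ∧ F n ω x ≤ (q2 : ℝ)) := by
      intro hmem
      exact hn2 ⟨hmem.1, hmem.2⟩
    push_neg at h1
    have hCmin : min bstar C ≤ C := min_le_right _ _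
    have hminb : min bstar C ≤ bstar := min_le_left _ _
    by_cases hle : (q1 : ℝ) ≤ F n ω x
    · have := h1 hle
      linarith
    · push_neg at hle
      linarith

end Dich


/-- under shiftability, if there is a probability stationary measure for
the inverse dynamics, then for the forward dynamics φ₊ and φ₋ are positive everywhere,
and the CDF of the stationary measure coincides with φ₊ at its continuity points. -/
theorem rds_inverse_probability_stationary_measure
    {Ω : Type*} [MeasurableSpace Ω] (P : Measure Ω) [IsProbabilityMeasure P]
    {ι : Type*} [Fintype ι] [MeasurableSpace ι] [MeasurableSingletonClass ι]
    (f : ι → ℝ → ℝ)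
    (hf : ∀ i, StrictMono (f i) ∧ Function.Bijective (f i))
    (g : ℕ → Ω → ι) (hgmeas : ∀ n, Measurable (g n))
    (hindep : iIndepFun g P)
    (μ : Measure ι) [IsProbabilityMeasure μ] (hlaw : ∀ n, Measure.map (g n) P = μ)
    (F : ℕ → Ω → ℝ → ℝ)
    (hF0 : ∀ ω x, F 0 ω x = x)
    (hFS : ∀ n ω x, F (n + 1) ω x = f (g n ω) (F n ω x))
    (hshift : ∀ x : ℝ, 0 < μ {i | f i x < x} ∧ 0 < μ {i | x < f i x})
    (ν : Measure ℝ) [IsProbabilityMeasure ν]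
    (hstat : ∀ A : Set ℝ, MeasurableSet A → ν A = ∑ i, μ {i} * ν (f i '' A)) :
    (∀ x : ℝ, 0 < P {ω | Tendsto (fun n => F n ω x) atTop atTop} ∧
      0 < P {ω | Tendsto (fun n => F n ω x) atTop atBot}) ∧
    (∀ x : ℝ, ContinuousAt (fun t : ℝ => (ν (Set.Iic t)).toReal) x →
      ν (Set.Iic x) = P {ω | Tendsto (fun n => F n ω x) atTop atTop}) := by
  have key : ∀ x : ℝ, ν (Set.Iic x) = P {ω | Tendsto (fun n => F n ω x) atTop atTop} ∧
      0 < P {ω | Tendsto (fun n => F n ω x) atTop atTop} ∧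
      0 < P {ω | Tendsto (fun n => F n ω x) atTop atBot} := by
    intro x
    set Tp : Set Ω := {ω | Tendsto (fun n => F n ω x) atTop atTop} with hTp
    set Tm : Set Ω := {ω | Tendsto (fun n => F n ω x) atTop atBot} with hTm
    have hTp_meas : MeasurableSet Tp :=
      measurableSet_tendsto atTop (fun n => RDSF_meas hf hgmeas hF0 hFS x n)
    have hTm_meas : MeasurableSet Tm :=
      measurableSet_tendsto atBot (fun n => RDSF_meas hf hgmeas hF0 hFS x n)
    have hdisj : Disjoint Tp Tm := by
      rw [Set.disjoint_left]
      intro ω hω1 hω2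
      have h1 : ∀ᶠ n in atTop, (1 : ℝ) ≤ F n ω x := hω1.eventually_ge_atTop 1
      have h2 : ∀ᶠ n in atTop, F n ω x ≤ (0 : ℝ) := hω2.eventually_le_atBot 0
      obtain ⟨n, hn1, hn2⟩ := (h1.and h2).exists
      linarith
    have hdich := RDSdichotomy P hf hgmeas hindep μ hlaw hF0 hFS hshift ν hstat x
    have hlim : ∀ᵐ ω ∂P, Tendsto (fun n => RDSh ν (F n ω x)) atTop
        (nhds (Tp.indicator (fun _ => (1 : ℝ)) ω)) := by
      filter_upwards [hdich] with ω hω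
      rcases hω with h | h
      · rw [Set.indicator_of_mem (show ω ∈ Tp from h)]
        exact (RDSh_tendsto_atTop ν).comp h
      · have hnot : ω ∉ Tp := fun hmem => Set.disjoint_left.1 hdisj hmem h
        rw [Set.indicator_of_notMem hnot]
        exact (RDSh_tendsto_atBot ν).comp h
    have hmart := RDSmartingale P hf hgmeas hindep μ hlaw hF0 hFS ν hstat x
    have hint_eq : ∀ n, ∫ ω, RDSh ν (F n ω x) ∂P = RDSh ν x := by
      intro n
      have hce := hmart.condExp_ae_eq (Nat.zero_le n)
      calc ∫ ω, RDSh ν (F n ω x) ∂P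
          = ∫ ω, (P[fun ω => RDSh ν (F n ω x)|RDSfilt g hgmeas 0]) ω ∂P :=
            (integral_condExp ((RDSfilt g hgmeas).le 0)).symm
        _ = ∫ ω, RDSh ν (F 0 ω x) ∂P := integral_congr_ae hce
        _ = RDSh ν x := by
            have : (fun ω => RDSh ν (F 0 ω x)) = fun _ => RDSh ν x :=
              funext fun ω => by rw [hF0]
            rw [this, integral_const, probReal_univ]
            simp
    have hdct : Tendsto (fun n => ∫ ω, RDSh ν (F n ω x) ∂P) atTop
        (nhds (∫ ω, Tp.indicator (fun _ => (1 : ℝ)) ω ∂P)) := by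
      refine tendsto_integral_of_dominated_convergence (fun _ => (1 : ℝ))
        (fun n => ((RDSh_measurable ν).comp
          (RDSF_meas hf hgmeas hF0 hFS x n)).aestronglyMeasurable)
        (integrable_const 1)
        (fun n => ae_of_all _ fun ω => by
          simpa [Real.norm_eq_abs] using RDSabs_h_le_one ν (F n ω x)) hlim
    have hval : ∫ ω, Tp.indicator (fun _ => (1 : ℝ)) ω ∂P = (P Tp).toReal := by
      rw [integral_indicator_const (1 : ℝ) hTp_meas]
      simp [measureReal_def]
    have heq : (P Tp).toReal = RDSh ν x := by
      have hconst : (fun n => ∫ ω, RDSh ν (F n ω x) ∂P) = fun _ => RDSh ν x :=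
        funext hint_eq
      rw [hconst] at hdct
      have := tendsto_nhds_unique tendsto_const_nhds hdct
      rw [hval] at this
      exact this.symm
    have hpos := RDSh_pos hf μ ν hstat hshift x
    have hlt1 := RDSnu_Iic_lt_one hf μ ν hstat hshift x
    have hmain : ν (Set.Iic x) = P Tp := by
      have := ENNReal.toReal_eq_toReal_iff' (measure_ne_top P Tp) (measure_ne_top ν (Set.Iic x))
      exact (this.1 (by rw [heq]; rfl)).symm
    refine ⟨hmain, ?_, ?_⟩
    · rw [← hmain]
      exact RDSnu_Iic_pos hf μ ν hstat hshift x
    · -- positivity of P Tm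
      have hcover : P (Tp ∪ Tm) = 1 := by
        have hc0 : P (Tp ∪ Tm)ᶜ = 0 := by
          have hae : ∀ᵐ ω ∂P, ω ∈ Tp ∪ Tm := by
            filter_upwards [hdich] with ω hω
            rcases hω with h | h
            · exact Or.inl h
            · exact Or.inr h
          rw [ae_iff] at hae
          exact hae
        rw [← prob_compl_eq_zero_iff (hTp_meas.union hTm_meas)]
        exact hc0
      rw [pos_iff_ne_zero]
      intro hTm0
      have h1le : (1 : ℝ≥0∞) ≤ P Tp := by
        calc (1 : ℝ≥0∞) = P (Tp ∪ Tm) := hcover.symm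
          _ ≤ P Tp + P Tm := measure_union_le _ _
          _ = P Tp := by rw [hTm0, add_zero]
      have hPp1 : P Tp = 1 := le_antisymm prob_le_one h1le
      rw [hPp1] at heq
      simp only [ENNReal.toReal_one] at heq
      linarith
  exact ⟨fun x => ⟨(key x).2.1, (key x).2.2⟩, fun x _ => (key x).1⟩
end
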